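/- arXiv:1804.05135 — 6 statements merged into one kernel-verified Lean document; each statement's English description precedes it below -/
import Mathlib

section
/- Let n ∈ S. Then ν(n + t) = ν(n) + 1, where t is the trade element of S. (Equivalently: adding the trade element to any semigroup element increases the mode frequency by exactly 1.) -/
/-- The (finite) set of factorizations of `n` in the numerical semigroup `⟨n₁, n₂, n₃⟩`:
triples `(a₁, a₂, a₃) ∈ ℕ³` with `a₁n₁ + a₂n₂ + a₃n₃ = n`.  (Each coordinate is at most `n`
whenever the generators are positive, so the bounding box `[0,n]³` captures all of them.) -/
def Zf (n₁ n₂ n₃ n : ℕ) : Finset (ℕ × ℕ × ℕ) :=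
  (Finset.range (n + 1) ×ˢ Finset.range (n + 1) ×ˢ Finset.range (n + 1)).filter
    (fun a => a.1 * n₁ + a.2.1 * n₂ + a.2.2 * n₃ = n)

/-- The length of a factorization. -/
def len (a : ℕ × ℕ × ℕ) : ℕ := a.1 + a.2.1 + a.2.2

/-- Membership in the numerical semigroup `⟨n₁, n₂, n₃⟩`. -/
def inS (n₁ n₂ n₃ n : ℕ) : Prop := ∃ a₁ a₂ a₃ : ℕ, a₁ * n₁ + a₂ * n₂ + a₃ * n₃ = n

/-- `fmul n₁ n₂ n₃ n ℓ` is the number of factorizations of `n` having length `ℓ`. -/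
def fmul (n₁ n₂ n₃ n ℓ : ℕ) : ℕ := ((Zf n₁ n₂ n₃ n).filter (fun a => len a = ℓ)).card

/-- The mode frequency `ν(n)`: the maximum, over all lengths `ℓ ∈ ℕ`, of the number of
factorizations of `n` of length `ℓ`. -/
noncomputable def modeFreq (n₁ n₂ n₃ n : ℕ) : ℕ := sSup (Set.range (fmul n₁ n₂ n₃ n))

/-- The set `γ(n)` of mode factorization lengths. -/
def modeSet (n₁ n₂ n₃ n : ℕ) : Set ℕ := {ℓ | fmul n₁ n₂ n₃ n ℓ = modeFreq n₁ n₂ n₃ n}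

/-- The mean factorization length `μ(n)`. -/
def meanLen (n₁ n₂ n₃ n : ℕ) : ℚ :=
  (∑ z ∈ Zf n₁ n₂ n₃ n, (len z : ℚ)) / ((Zf n₁ n₂ n₃ n).card : ℚ)

/-- The lengths of all factorizations of `n`, counted with multiplicity, in nondecreasing
order. -/
def sortedLengths (n₁ n₂ n₃ n : ℕ) : List ℕ :=
  Multiset.sort ((Zf n₁ n₂ n₃ n).val.map len) (· ≤ ·)

/-- The median factorization length `η(n)`: with the lengths listed with multiplicity in
nondecreasing order as `ℓ₁ ≤ ⋯ ≤ ℓ_M`, it is `ℓ_{(M+1)/2}` for odd `M` and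
`(ℓ_{M/2} + ℓ_{M/2+1})/2` for even `M`. -/
def medianLen (n₁ n₂ n₃ n : ℕ) : ℚ :=
  let l := sortedLengths n₁ n₂ n₃ n
  if l.length % 2 = 1 then (l.getD (l.length / 2) 0 : ℚ)
  else ((l.getD (l.length / 2 - 1) 0 : ℚ) + (l.getD (l.length / 2) 0 : ℚ)) / 2

lemma mem_Zf_iff {n₁ n₂ n₃ n : ℕ} (h1 : 0 < n₁) (h2 : 0 < n₂) (h3 : 0 < n₃)
    (a : ℕ × ℕ × ℕ) : a ∈ Zf n₁ n₂ n₃ n ↔ a.1 * n₁ + a.2.1 * n₂ + a.2.2 * n₃ = n := by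
  simp only [Zf, Finset.mem_filter, Finset.mem_product, Finset.mem_range]
  constructor
  · rintro ⟨-, h⟩; exact h
  · intro h
    have e1 : a.1 ≤ a.1 * n₁ := Nat.le_mul_of_pos_right _ h1
    have e2 : a.2.1 ≤ a.2.1 * n₂ := Nat.le_mul_of_pos_right _ h2
    have e3 : a.2.2 ≤ a.2.2 * n₃ := Nat.le_mul_of_pos_right _ h3
    exact ⟨⟨by omega, by omega, by omega⟩, h⟩

lemma uniq {n₁ δ d₁ d₂ : ℕ} (hδ : 0 < δ) (hd₂ : 0 < d₂)
    (hco : Nat.gcd d₁ d₂ = 1) {a₁ a₂ a₃ b₁ b₂ b₃ : ℕ}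
    (hval : a₁ * n₁ + a₂ * (n₁ + δ * d₁) + a₃ * (n₁ + δ * d₁ + δ * d₂)
          = b₁ * n₁ + b₂ * (n₁ + δ * d₁) + b₃ * (n₁ + δ * d₁ + δ * d₂))
    (hlen : a₁ + a₂ + a₃ = b₁ + b₂ + b₃)
    (ha : a₂ < d₁ + d₂) (hb : b₂ < d₁ + d₂) :
    a₁ = b₁ ∧ a₂ = b₂ ∧ a₃ = b₃ := by
  have hval' : (a₁:ℤ) * n₁ + a₂ * ((n₁:ℤ) + δ * d₁) + a₃ * ((n₁:ℤ) + δ * d₁ + δ * d₂)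
          = (b₁:ℤ) * n₁ + b₂ * ((n₁:ℤ) + δ * d₁) + b₃ * ((n₁:ℤ) + δ * d₁ + δ * d₂) := by
    exact_mod_cast hval
  have hlen' : (a₁:ℤ) + a₂ + a₃ = (b₁:ℤ) + b₂ + b₃ := by exact_mod_cast hlen
  have hδ' : (δ:ℤ) ≠ 0 := by positivity
  have hd₂' : (d₂:ℤ) ≠ 0 := by positivity
  have key0 : (δ:ℤ) * ((d₁:ℤ) * ((a₁:ℤ) - b₁) - (d₂:ℤ) * ((a₃:ℤ) - b₃)) = 0 := by
    linear_combination ((n₁:ℤ) + (δ:ℤ)*d₁) * hlen' - hval'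
  have key : (d₁:ℤ) * ((a₁:ℤ) - b₁) = (d₂:ℤ) * ((a₃:ℤ) - b₃) := by
    rcases mul_eq_zero.mp key0 with h | h
    · exact absurd h hδ'
    · linarith
  have hcoZ : IsCoprime (d₂ : ℤ) (d₁ : ℤ) := by
    rw [Int.isCoprime_iff_gcd_eq_one, Int.gcd_natCast_natCast, Nat.gcd_comm]
    exact hco
  obtain ⟨k, hk⟩ : (d₂ : ℤ) ∣ ((a₁:ℤ) - b₁) :=
    hcoZ.dvd_of_dvd_mul_left ⟨(a₃:ℤ) - b₃, by linarith [key]⟩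
  have hzk : (a₃:ℤ) - b₃ = (d₁ : ℤ) * k := by
    have h2 : (d₂ : ℤ) * ((a₃:ℤ) - b₃) = d₂ * ((d₁:ℤ) * k) := by rw [← key, hk]; ring
    exact mul_left_cancel₀ hd₂' h2
  have hyk : (a₂:ℤ) - b₂ = -k * ((d₁ : ℤ) + d₂) := by linarith [hlen', hk, hzk]
  have hT : (0 : ℤ) < (d₁ : ℤ) + d₂ := by positivity
  have hylt : (a₂:ℤ) - b₂ < (d₁ : ℤ) + d₂ := by omega
  have hygt : -((d₁ : ℤ) + d₂) < (a₂:ℤ) - b₂ := by omega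
  have hk0 : k = 0 := by
    have hlt : -k * ((d₁:ℤ) + d₂) < 1 * ((d₁:ℤ) + d₂) := by rw [one_mul]; linarith
    have hgt : (-1 : ℤ) * ((d₁:ℤ) + d₂) < -k * ((d₁:ℤ) + d₂) := by
      rw [neg_one_mul]; linarith
    have h1 : -k < 1 := lt_of_mul_lt_mul_right hlt (le_of_lt hT)
    have h2 : (-1 : ℤ) < -k := lt_of_mul_lt_mul_right hgt (le_of_lt hT)
    omega
  rw [hk0, mul_zero] at hk hzk
  have hy0 : (a₂:ℤ) - b₂ = 0 := by rw [hyk, hk0]; ring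
  refine ⟨?_, ?_, ?_⟩ <;> omega

lemma reduce {n₁ n₂ n₃ d₁ d₂ : ℕ} (htrade : d₂ * n₁ + d₁ * n₃ = (d₁ + d₂) * n₂)
    (hT : 0 < d₁ + d₂) (a₁ a₂ a₃ : ℕ) :
    ∃ b₁ b₂ b₃ : ℕ, b₁ * n₁ + b₂ * n₂ + b₃ * n₃ = a₁ * n₁ + a₂ * n₂ + a₃ * n₃ ∧
      b₁ + b₂ + b₃ = a₁ + a₂ + a₃ ∧ b₂ < d₁ + d₂ := by
  induction a₂ using Nat.strong_induction_on generalizing a₁ a₃ with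
  | _ a₂ ih =>
    by_cases h : a₂ < d₁ + d₂
    · exact ⟨a₁, a₂, a₃, rfl, rfl, h⟩
    · push_neg at h
      obtain ⟨b₁, b₂, b₃, hv, hl, hs⟩ := ih (a₂ - (d₁ + d₂)) (by omega) (a₁ + d₂) (a₃ + d₁)
      refine ⟨b₁, b₂, b₃, ?_, by omega, hs⟩
      rw [hv]
      have h1 : (a₂ - (d₁ + d₂)) * n₂ + (d₁ + d₂) * n₂ = a₂ * n₂ := by
        rw [← add_mul]; congr 1; omega
      have h2 : (a₁ + d₂) * n₁ = a₁ * n₁ + d₂ * n₁ := by ring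
      have h3 : (a₃ + d₁) * n₃ = a₃ * n₃ + d₁ * n₃ := by ring
      omega

lemma fmul_le {n₁ δ d₁ d₂ : ℕ} (h1 : 0 < n₁) (hδ : 0 < δ) (hd₂ : 0 < d₂)
    (hco : Nat.gcd d₁ d₂ = 1) (n L : ℕ) :
    fmul n₁ (n₁ + δ * d₁) (n₁ + δ * d₁ + δ * d₂) (n + (d₁ + d₂) * (n₁ + δ * d₁)) L
      ≤ fmul n₁ (n₁ + δ * d₁) (n₁ + δ * d₁ + δ * d₂) n (L - (d₁ + d₂)) + 1 := by
  set n₂ := n₁ + δ * d₁ with hn₂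
  set n₃ := n₁ + δ * d₁ + δ * d₂ with hn₃
  have h2 : 0 < n₂ := by omega
  have h3 : 0 < n₃ := by omega
  set T := d₁ + d₂ with hTdef
  set S' := (Zf n₁ n₂ n₃ (n + T * n₂)).filter (fun a => len a = L) with hS'
  have hsplit : (S'.filter (fun a => T ≤ a.2.1)).card
      + (S'.filter (fun a => ¬ T ≤ a.2.1)).card = S'.card :=
    Finset.card_filter_add_card_filter_not _
  have hbig : (S'.filter (fun a => T ≤ a.2.1)).card
      ≤ fmul n₁ n₂ n₃ n (L - T) := by
    apply Finset.card_le_card_of_injOn (fun a => (a.1, a.2.1 - T, a.2.2))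
    · intro a ha
      simp only [hS', Finset.mem_coe, Finset.mem_filter] at ha
      obtain ⟨⟨haz, halen⟩, haT⟩ := ha
      rw [mem_Zf_iff h1 h2 h3] at haz
      simp only [fmul, Finset.mem_coe, Finset.mem_filter]  -- goal membership
      constructor
      · rw [mem_Zf_iff h1 h2 h3]
        have hmm : (a.2.1 - T) * n₂ + T * n₂ = a.2.1 * n₂ := by
          rw [← add_mul]; congr 1; omega
        simp only []
        omega
      · simp only [len] at halen ⊢
        omega
    · intro a ha b hb hab
      simp only [hS', Finset.coe_filter, Set.mem_setOf_eq, Finset.mem_filter] at ha hb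
      obtain ⟨⟨-, -⟩, haT⟩ := ha
      obtain ⟨⟨-, -⟩, hbT⟩ := hb
      obtain ⟨x1, x2, x3⟩ := a
      obtain ⟨y1, y2, y3⟩ := b
      simp only [Prod.mk.injEq] at hab ⊢
      simp only [] at haT hbT
      omega
  have hsmall : (S'.filter (fun a => ¬ T ≤ a.2.1)).card ≤ 1 := by
    rw [Finset.card_le_one]
    intro a ha b hb
    simp only [hS', Finset.mem_filter] at ha hb
    obtain ⟨⟨haz, halen⟩, haT⟩ := ha
    obtain ⟨⟨hbz, hblen⟩, hbT⟩ := hb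
    rw [mem_Zf_iff h1 h2 h3] at haz hbz
    obtain ⟨x1, x2, x3⟩ := a
    obtain ⟨y1, y2, y3⟩ := b
    simp only [len] at halen hblen
    simp only [] at haT hbT haz hbz
    have := uniq (a₁ := x1) (a₂ := x2) (a₃ := x3) (b₁ := y1) (b₂ := y2) (b₃ := y3)
      hδ hd₂ hco (by rw [← hn₂, ← hn₃]; omega) (by omega) (by omega) (by omega)
    simp only [Prod.mk.injEq]
    omega
  calc fmul n₁ n₂ n₃ (n + T * n₂) L = S'.card := rfl
    _ = _ + _ := hsplit.symm
    _ ≤ fmul n₁ n₂ n₃ n (L - T) + 1 := by omega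

lemma fmul_ge {n₁ n₂ n₃ d₁ d₂ : ℕ} (h1 : 0 < n₁) (h2 : 0 < n₂) (h3 : 0 < n₃)
    (htrade : d₂ * n₁ + d₁ * n₃ = (d₁ + d₂) * n₂) (hT : 0 < d₁ + d₂) (n L : ℕ)
    (hpos : 0 < fmul n₁ n₂ n₃ n L) :
    fmul n₁ n₂ n₃ n L + 1 ≤ fmul n₁ n₂ n₃ (n + (d₁ + d₂) * n₂) (L + (d₁ + d₂)) := by
  set T := d₁ + d₂ with hTdef
  set src := (Zf n₁ n₂ n₃ n).filter (fun a => len a = L) with hsrc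
  set tgt := (Zf n₁ n₂ n₃ (n + T * n₂)).filter (fun a => len a = L + T) with htgt
  set φ : ℕ × ℕ × ℕ → ℕ × ℕ × ℕ := fun a => (a.1, a.2.1 + T, a.2.2) with hφ
  have himg : src.image φ ⊆ tgt := by
    intro b hb
    obtain ⟨a, ha, rfl⟩ := Finset.mem_image.mp hb
    simp only [hsrc, Finset.mem_filter] at ha
    obtain ⟨haz, halen⟩ := ha
    rw [mem_Zf_iff h1 h2 h3] at haz
    simp only [htgt, Finset.mem_filter]
    constructor
    · rw [mem_Zf_iff h1 h2 h3]
      have hmm : (a.2.1 + T) * n₂ = a.2.1 * n₂ + T * n₂ := by ring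
      simp only [hφ]
      omega
    · simp only [hφ, len] at halen ⊢
      omega
  have hcard : (src.image φ).card = src.card := by
    apply Finset.card_image_of_injOn
    intro a _ b _ hab
    obtain ⟨x1, x2, x3⟩ := a
    obtain ⟨y1, y2, y3⟩ := b
    simp only [hφ, Prod.mk.injEq] at hab ⊢
    omega
  obtain ⟨a, ha⟩ := Finset.card_pos.mp hpos
  simp only [hsrc, Finset.mem_filter] at ha
  obtain ⟨haz, halen⟩ := ha
  rw [mem_Zf_iff h1 h2 h3] at haz
  obtain ⟨b₁, b₂, b₃, hbv, hbl, hbs⟩ := reduce htrade hT a.1 (a.2.1 + T) a.2.2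
  have hmm : (a.2.1 + T) * n₂ = a.2.1 * n₂ + T * n₂ := by ring
  have hbmem : ((b₁, b₂, b₃) : ℕ × ℕ × ℕ) ∈ tgt := by
    simp only [htgt, Finset.mem_filter]
    constructor
    · rw [mem_Zf_iff h1 h2 h3]
      simp only []
      omega
    · simp only [len] at halen ⊢
      omega
  have hbnot : ((b₁, b₂, b₃) : ℕ × ℕ × ℕ) ∉ src.image φ := by
    intro hmem
    obtain ⟨c, _, hc⟩ := Finset.mem_image.mp hmem
    simp only [hφ, Prod.mk.injEq] at hc
    omega
  have hins : insert ((b₁, b₂, b₃) : ℕ × ℕ × ℕ) (src.image φ) ⊆ tgt :=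
    Finset.insert_subset hbmem himg
  calc fmul n₁ n₂ n₃ n L + 1 = src.card + 1 := rfl
    _ = (insert ((b₁, b₂, b₃) : ℕ × ℕ × ℕ) (src.image φ)).card := by
        rw [Finset.card_insert_of_notMem hbnot, hcard]
    _ ≤ tgt.card := Finset.card_le_card hins
    _ = fmul n₁ n₂ n₃ (n + T * n₂) (L + T) := rfl


/-- Adding the trade element t to any semigroup element increases the mode
frequency by exactly 1: ν(n + t) = ν(n) + 1. -/
theorem mode_freq_add_trade (n₁ n₂ n₃ : ℕ) (h₀ : 0 < n₁) (h₁ : n₁ < n₂) (h₂ : n₂ < n₃)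
    (hg : Nat.gcd n₁ (Nat.gcd n₂ n₃) = 1)
    (δ t : ℕ) (hδ : δ = Nat.gcd (n₂ - n₁) (n₃ - n₂)) (ht : t = n₂ * (n₃ - n₁) / δ)
    (n : ℕ) (hn : inS n₁ n₂ n₃ n) :
    modeFreq n₁ n₂ n₃ (n + t) = modeFreq n₁ n₂ n₃ n + 1 := by
  have h2 : 0 < n₂ := by omega
  have h3 : 0 < n₃ := by omega
  have hδpos : 0 < δ := by
    rw [hδ]
    exact Nat.gcd_pos_of_pos_left _ (by omega)
  have hdvd1 : δ ∣ n₂ - n₁ := hδ ▸ Nat.gcd_dvd_left _ _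
  have hdvd2 : δ ∣ n₃ - n₂ := hδ ▸ Nat.gcd_dvd_right _ _
  set d₁ := (n₂ - n₁) / δ with hd₁def
  set d₂ := (n₃ - n₂) / δ with hd₂def
  have hd1 : δ * d₁ = n₂ - n₁ := Nat.mul_div_cancel' hdvd1
  have hd2 : δ * d₂ = n₃ - n₂ := Nat.mul_div_cancel' hdvd2
  have hd₁pos : 0 < d₁ := by
    rcases Nat.eq_zero_or_pos d₁ with h | h
    · rw [h, mul_zero] at hd1; omega
    · exact h
  have hd₂pos : 0 < d₂ := by
    rcases Nat.eq_zero_or_pos d₂ with h | h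
    · rw [h, mul_zero] at hd2; omega
    · exact h
  have hco : Nat.gcd d₁ d₂ = 1 := by
    rw [hd₁def, hd₂def, hδ]
    exact Nat.coprime_div_gcd_div_gcd (hδ ▸ hδpos)
  have e2 : n₂ = n₁ + δ * d₁ := by omega
  have e3 : n₃ = n₁ + δ * d₁ + δ * d₂ := by omega
  have htrade : d₂ * n₁ + d₁ * n₃ = (d₁ + d₂) * n₂ := by rw [e2, e3]; ring
  have hTpos : 0 < d₁ + d₂ := by omega
  have htT : t = (d₁ + d₂) * n₂ := by
    have hsum : δ * (d₁ + d₂) = δ * d₁ + δ * d₂ := by ring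
    have h31 : n₃ - n₁ = δ * (d₁ + d₂) := by omega
    rw [ht, h31, show n₂ * (δ * (d₁ + d₂)) = ((d₁ + d₂) * n₂) * δ by ring,
      Nat.mul_div_cancel _ hδpos]
  have hbddn : ∀ m, BddAbove (Set.range (fmul n₁ n₂ n₃ m)) := fun m =>
    ⟨(Zf n₁ n₂ n₃ m).card, by rintro x ⟨ℓ, rfl⟩; exact Finset.card_filter_le _ _⟩
  have hfle : ∀ m ℓ, fmul n₁ n₂ n₃ m ℓ ≤ modeFreq n₁ n₂ n₃ m := fun m ℓ =>
    le_csSup (hbddn m) ⟨ℓ, rfl⟩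
  obtain ⟨L₀, hL₀⟩ : ∃ L₀, fmul n₁ n₂ n₃ n L₀ = modeFreq n₁ n₂ n₃ n :=
    Nat.sSup_mem (⟨fmul n₁ n₂ n₃ n 0, 0, rfl⟩ : (Set.range (fmul n₁ n₂ n₃ n)).Nonempty) (hbddn n)
  have hν1 : 0 < fmul n₁ n₂ n₃ n L₀ := by
    obtain ⟨a₁, a₂, a₃, hfac⟩ := hn
    have hamem : ((a₁, a₂, a₃) : ℕ × ℕ × ℕ) ∈ Zf n₁ n₂ n₃ n :=
      (mem_Zf_iff h₀ h2 h3 _).mpr hfac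
    have hp : 0 < fmul n₁ n₂ n₃ n (len (a₁, a₂, a₃)) :=
      Finset.card_pos.mpr ⟨(a₁, a₂, a₃), Finset.mem_filter.mpr ⟨hamem, rfl⟩⟩
    have := hfle n (len (a₁, a₂, a₃))
    omega
  apply le_antisymm
  · apply csSup_le (⟨fmul n₁ n₂ n₃ (n + t) 0, 0, rfl⟩ : (Set.range (fmul n₁ n₂ n₃ (n + t))).Nonempty)
    rintro x ⟨L, rfl⟩
    have e3' : n₃ = n₂ + δ * d₂ := by omega
    have hle : fmul n₁ n₂ n₃ (n + t) L ≤ fmul n₁ n₂ n₃ n (L - (d₁ + d₂)) + 1 := by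
      have key := fmul_le (δ := δ) (d₁ := d₁) (d₂ := d₂) h₀ hδpos hd₂pos hco n L
      rw [← e2] at key
      rw [← e3'] at key
      rw [← htT] at key
      exact key
    have := hfle n (L - (d₁ + d₂))
    omega
  · have hg1 := fmul_ge h₀ h2 h3 htrade hTpos n L₀ hν1
    have hg2 := hfle (n + t) (L₀ + (d₁ + d₂))
    rw [← htT] at hg1
    omega
end

section
/- There exists a function c₀ : ℕ → ℚ satisfying c₀(n + t) = c₀(n) for all n ∈ ℕ (i.e., c₀ is periodic with period t) such that ν(n) = n/t + c₀(n) for every n ∈ S. -/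
lemma mem_Zf' {n₁ n₂ n₃ n : ℕ} (h1 : 0 < n₁) (h2 : 0 < n₂) (h3 : 0 < n₃) {a : ℕ × ℕ × ℕ} :
    a ∈ Zf n₁ n₂ n₃ n ↔ a.1 * n₁ + a.2.1 * n₂ + a.2.2 * n₃ = n := by
  simp only [Zf, Finset.mem_filter, Finset.mem_product, Finset.mem_range]
  constructor
  · exact fun h => h.2
  · intro h
    have b1 : a.1 ≤ a.1 * n₁ := Nat.le_mul_of_pos_right _ h1
    have b2 : a.2.1 ≤ a.2.1 * n₂ := Nat.le_mul_of_pos_right _ h2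
    have b3 : a.2.2 ≤ a.2.2 * n₃ := Nat.le_mul_of_pos_right _ h3
    exact ⟨⟨by omega, by omega, by omega⟩, h⟩

lemma line_lemma {n₁ n₂ n₃ δ d1 d2 : ℕ} (hδ : 0 < δ) (hd2p : 0 < d2)
    (e1 : n₂ = n₁ + δ * d1) (e2 : n₃ = n₂ + δ * d2) (hco : Nat.gcd d1 d2 = 1)
    {n : ℕ} {a b : ℕ × ℕ × ℕ}
    (ha : a.1 * n₁ + a.2.1 * n₂ + a.2.2 * n₃ = n) (hb : b.1 * n₁ + b.2.1 * n₂ + b.2.2 * n₃ = n)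
    (hl : len a = len b) :
    ∃ k : ℤ, (a.1 : ℤ) = b.1 + k * d2 ∧ (a.2.1 : ℤ) = b.2.1 - k * (d1 + d2) ∧
      (a.2.2 : ℤ) = b.2.2 + k * d1 := by
  have hsum : ((a.1 : ℤ) - b.1) + ((a.2.1 : ℤ) - b.2.1) + ((a.2.2 : ℤ) - b.2.2) = 0 := by
    have := hl
    simp only [len] at this
    have : (a.1 : ℤ) + a.2.1 + a.2.2 = (b.1 : ℤ) + b.2.1 + b.2.2 := by exact_mod_cast this
    linarith
  have hval : ((a.1 : ℤ) - b.1) * n₁ + ((a.2.1 : ℤ) - b.2.1) * n₂ + ((a.2.2 : ℤ) - b.2.2) * n₃ = 0 := by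
    have ha' : (a.1 : ℤ) * n₁ + a.2.1 * n₂ + a.2.2 * n₃ = n := by exact_mod_cast ha
    have hb' : (b.1 : ℤ) * n₁ + b.2.1 * n₂ + b.2.2 * n₃ = n := by exact_mod_cast hb
    linarith
  have e1' : (n₂ : ℤ) = n₁ + δ * d1 := by exact_mod_cast e1
  have e2' : (n₃ : ℤ) = n₂ + δ * d2 := by exact_mod_cast e2
  have hxz : ((a.1 : ℤ) - b.1) * d1 = ((a.2.2 : ℤ) - b.2.2) * d2 := by
    have hδ0 : (δ : ℤ) ≠ 0 := by exact_mod_cast hδ.ne'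
    have key : (δ : ℤ) * (((a.1 : ℤ) - b.1) * d1) = (δ : ℤ) * (((a.2.2 : ℤ) - b.2.2) * d2) := by
      linear_combination (n₂ : ℤ) * hsum - hval - ((a.1 : ℤ) - b.1) * e1'
        + ((a.2.2 : ℤ) - b.2.2) * e2'
    exact mul_left_cancel₀ hδ0 key
  have hd2 : (d2 : ℤ) ∣ ((a.1 : ℤ) - b.1) := by
    have hdvd : (d2 : ℤ) ∣ ((a.1 : ℤ) - b.1) * d1 := ⟨(a.2.2 : ℤ) - b.2.2, by linarith⟩
    have hcop : IsCoprime (d2 : ℤ) (d1 : ℤ) := by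
      rw [Int.isCoprime_iff_gcd_eq_one]
      simpa [Int.gcd, Nat.gcd_comm] using hco
    exact hcop.dvd_of_dvd_mul_right hdvd
  obtain ⟨k, hk⟩ := hd2
  have hd20 : (d2 : ℤ) ≠ 0 := by exact_mod_cast hd2p.ne'
  have hz : ((a.2.2 : ℤ) - b.2.2) = k * d1 := by
    have : ((a.2.2 : ℤ) - b.2.2) * d2 = (k * d1) * d2 := by
      rw [← hxz, hk]; ring
    exact mul_right_cancel₀ hd20 this
  refine ⟨k, by linear_combination hk, by linear_combination hsum - hk - hz, by linear_combination hz⟩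

lemma lower_bound {n₁ n₂ n₃ d1 d2 : ℕ} (h1 : 0 < n₁) (h2 : 0 < n₂) (h3 : 0 < n₃)
    (htr : d2 * n₁ + d1 * n₃ = (d1 + d2) * n₂) (hdp : 0 < d1 + d2)
    {n ℓ : ℕ} (hne : ((Zf n₁ n₂ n₃ n).filter (fun a => len a = ℓ)).Nonempty) :
    ((Zf n₁ n₂ n₃ n).filter (fun a => len a = ℓ)).card + 1
      ≤ ((Zf n₁ n₂ n₃ (n + (d1 + d2) * n₂)).filter (fun a => len a = ℓ + (d1 + d2))).card := by
  classical
  set F := (Zf n₁ n₂ n₃ n).filter (fun a => len a = ℓ) with hF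
  set G := (Zf n₁ n₂ n₃ (n + (d1 + d2) * n₂)).filter (fun a => len a = ℓ + (d1 + d2)) with hG
  obtain ⟨b, hbF, hbmin⟩ := Finset.exists_min_image F (fun a => a.2.1) hne
  have hbZ : b.1 * n₁ + b.2.1 * n₂ + b.2.2 * n₃ = n := ((mem_Zf' h1 h2 h3).1 (Finset.mem_filter.1 hbF).1)
  have hbl : len b = ℓ := (Finset.mem_filter.1 hbF).2
  set φ : ℕ × ℕ × ℕ → ℕ × ℕ × ℕ := fun a => (a.1, a.2.1 + (d1 + d2), a.2.2) with hφ
  set e : ℕ × ℕ × ℕ := (b.1 + d2, b.2.1, b.2.2 + d1) with he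
  have himg : ∀ a ∈ F, φ a ∈ G := by
    intro a haF
    have haZ : a.1 * n₁ + a.2.1 * n₂ + a.2.2 * n₃ = n := ((mem_Zf' h1 h2 h3).1 (Finset.mem_filter.1 haF).1)
    have hal : len a = ℓ := (Finset.mem_filter.1 haF).2
    refine Finset.mem_filter.2 ⟨(mem_Zf' h1 h2 h3).2 ?_, ?_⟩
    · show a.1 * n₁ + (a.2.1 + (d1 + d2)) * n₂ + a.2.2 * n₃ = n + (d1 + d2) * n₂
      rw [add_mul]; linarith [haZ]
    · simp only [hφ, len] at hal ⊢; omega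
  have heG : e ∈ G := by
    refine Finset.mem_filter.2 ⟨(mem_Zf' h1 h2 h3).2 ?_, ?_⟩
    · show (b.1 + d2) * n₁ + b.2.1 * n₂ + (b.2.2 + d1) * n₃ = n + (d1 + d2) * n₂
      rw [add_mul, add_mul]; linarith [hbZ, htr]
    · simp only [he, len] at hbl ⊢; omega
  have henotin : e ∉ F.image φ := by
    intro hmem
    obtain ⟨a, haF, hae⟩ := Finset.mem_image.1 hmem
    have := hbmin a haF
    simp only [hφ, he, Prod.mk.injEq] at hae
    omega
  have hinj : Set.InjOn φ F := by
    intro a _ a' _ h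
    simp only [hφ, Prod.mk.injEq] at h
    exact Prod.ext h.1 (Prod.ext (by omega) h.2.2)
  have hsub : insert e (F.image φ) ⊆ G := by
    intro x hx
    rcases Finset.mem_insert.1 hx with h | h
    · exact h ▸ heG
    · obtain ⟨a, haF, rfl⟩ := Finset.mem_image.1 h
      exact himg a haF
  calc F.card + 1 = (F.image φ).card + 1 := by rw [Finset.card_image_of_injOn hinj]
    _ = (insert e (F.image φ)).card := (Finset.card_insert_of_notMem henotin).symm
    _ ≤ G.card := Finset.card_le_card hsub

lemma upper_bound {n₁ n₂ n₃ δ d1 d2 : ℕ} (h1 : 0 < n₁) (h2 : 0 < n₂) (h3 : 0 < n₃)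
    (hδ : 0 < δ) (hd1p : 0 < d1) (hd2p : 0 < d2)
    (e1 : n₂ = n₁ + δ * d1) (e2 : n₃ = n₂ + δ * d2) (hco : Nat.gcd d1 d2 = 1)
    (htr : d2 * n₁ + d1 * n₃ = (d1 + d2) * n₂)
    {n ℓ' : ℕ} :
    ((Zf n₁ n₂ n₃ (n + (d1 + d2) * n₂)).filter (fun a => len a = ℓ')).card
      ≤ ((Zf n₁ n₂ n₃ n).filter (fun a => len a = ℓ' - (d1 + d2))).card + 1 := by
  classical
  set G := (Zf n₁ n₂ n₃ (n + (d1 + d2) * n₂)).filter (fun a => len a = ℓ') with hG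
  set F := (Zf n₁ n₂ n₃ n).filter (fun a => len a = ℓ' - (d1 + d2)) with hF
  by_cases hGc : G.card ≤ 1
  · omega
  have hGne : G.Nonempty := Finset.card_pos.1 (by omega)
  obtain ⟨b₀, hb₀G, hb₀min⟩ := Finset.exists_min_image G (fun a => a.2.1) hGne
  have hval : ∀ a ∈ G, a.1 * n₁ + a.2.1 * n₂ + a.2.2 * n₃ = n + (d1 + d2) * n₂ :=
    fun a ha => (mem_Zf' h1 h2 h3).1 (Finset.mem_filter.1 ha).1
  have hlen : ∀ a ∈ G, len a = ℓ' := fun a ha => (Finset.mem_filter.1 ha).2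
  -- every element of G other than b₀ has middle coordinate ≥ d1 + d2
  have hmid : ∀ b ∈ G, b ≠ b₀ → d1 + d2 ≤ b.2.1 := by
    intro b hbG hne
    obtain ⟨k, hk1, hk2, hk3⟩ := line_lemma hδ hd2p e1 e2 hco (hval b hbG) (hval b₀ hb₀G)
      ((hlen b hbG).trans (hlen b₀ hb₀G).symm)
    have hge : (b₀.2.1 : ℤ) ≤ b.2.1 := by exact_mod_cast hb₀min b hbG
    have hk0 : k ≠ 0 := by
      intro h
      subst h
      simp only [Int.cast_zero, zero_mul, add_zero, sub_zero, mul_zero] at hk1 hk2 hk3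
      apply hne
      exact Prod.ext (by exact_mod_cast hk1) (Prod.ext (by exact_mod_cast hk2) (by exact_mod_cast hk3))
    have hd12 : (0 : ℤ) < (d1 : ℤ) + d2 := by positivity
    have hkle : k ≤ 0 := by nlinarith [hk2, hge]
    have hkneg : k ≤ -1 := by omega
    have hb₀nn : (0 : ℤ) ≤ b₀.2.1 := Int.natCast_nonneg _
    have hprod : (0 : ℤ) ≤ (-k - 1) * ((d1 : ℤ) + d2) :=
      mul_nonneg (by omega) (by positivity)
    have : (d1 : ℤ) + d2 ≤ b.2.1 := by linarith [hk2]
    exact_mod_cast this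
  set ψ : ℕ × ℕ × ℕ → ℕ × ℕ × ℕ := fun a => (a.1, a.2.1 - (d1 + d2), a.2.2) with hψ
  have himg : ∀ b ∈ G.erase b₀, ψ b ∈ F := by
    intro b hb
    have hbG := Finset.mem_erase.1 hb |>.2
    have hbne := Finset.mem_erase.1 hb |>.1
    have hm := hmid b hbG hbne
    refine Finset.mem_filter.2 ⟨(mem_Zf' h1 h2 h3).2 ?_, ?_⟩
    · have hv := hval b hbG
      show b.1 * n₁ + (b.2.1 - (d1 + d2)) * n₂ + b.2.2 * n₃ = n
      have hsplit : b.2.1 * n₂ = (b.2.1 - (d1 + d2)) * n₂ + (d1 + d2) * n₂ := by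
        rw [← add_mul]; congr 1; omega
      linarith [hv, hsplit]
    · have hl := hlen b hbG
      have : d1 + d2 ≤ len b := by simp only [len]; omega
      simp only [hψ, len] at hl ⊢
      omega
  have hinj : Set.InjOn ψ (G.erase b₀) := by
    intro a ha a' ha' h
    have hma := hmid a (Finset.mem_erase.1 ha).2 (Finset.mem_erase.1 ha).1
    have hma' := hmid a' (Finset.mem_erase.1 ha').2 (Finset.mem_erase.1 ha').1
    simp only [hψ, Prod.mk.injEq] at h
    exact Prod.ext h.1 (Prod.ext (by omega) h.2.2)
  have : (G.erase b₀).card ≤ F.card := by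
    rw [← Finset.card_image_of_injOn hinj]
    exact Finset.card_le_card (fun x hx => by
      obtain ⟨a, ha, rfl⟩ := Finset.mem_image.1 hx; exact himg a ha)
  have := Finset.card_erase_of_mem hb₀G
  omega

lemma fmul_bdd (n₁ n₂ n₃ n : ℕ) : BddAbove (Set.range (fmul n₁ n₂ n₃ n)) :=
  ⟨(Zf n₁ n₂ n₃ n).card, by rintro x ⟨ℓ, rfl⟩; exact Finset.card_filter_le _ _⟩

lemma fmul_le_modeFreq (n₁ n₂ n₃ n ℓ : ℕ) : fmul n₁ n₂ n₃ n ℓ ≤ modeFreq n₁ n₂ n₃ n :=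
  le_csSup (fmul_bdd _ _ _ _) ⟨ℓ, rfl⟩

lemma modeFreq_mem (n₁ n₂ n₃ n : ℕ) : ∃ ℓ, fmul n₁ n₂ n₃ n ℓ = modeFreq n₁ n₂ n₃ n := by
  have := Nat.sSup_mem (s := Set.range (fmul n₁ n₂ n₃ n)) ⟨fmul n₁ n₂ n₃ n 0, ⟨0, rfl⟩⟩
    (fmul_bdd _ _ _ _)
  obtain ⟨ℓ, h⟩ := this
  exact ⟨ℓ, h⟩

lemma modeFreq_pos {n₁ n₂ n₃ n : ℕ} (h1 : 0 < n₁) (h2 : 0 < n₂) (h3 : 0 < n₃)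
    (hn : inS n₁ n₂ n₃ n) : 0 < modeFreq n₁ n₂ n₃ n := by
  obtain ⟨a₁, a₂, a₃, h⟩ := hn
  have hm : (a₁, a₂, a₃) ∈ (Zf n₁ n₂ n₃ n).filter (fun a => len a = a₁ + a₂ + a₃) :=
    Finset.mem_filter.2 ⟨(mem_Zf' h1 h2 h3).2 h, rfl⟩
  have : 0 < fmul n₁ n₂ n₃ n (a₁ + a₂ + a₃) := Finset.card_pos.2 ⟨_, hm⟩
  exact lt_of_lt_of_le this (fmul_le_modeFreq _ _ _ _ _)

lemma nu_step {n₁ n₂ n₃ δ d1 d2 : ℕ} (h1 : 0 < n₁) (h2 : 0 < n₂) (h3 : 0 < n₃)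
    (hδ : 0 < δ) (hd1p : 0 < d1) (hd2p : 0 < d2)
    (e1 : n₂ = n₁ + δ * d1) (e2 : n₃ = n₂ + δ * d2) (hco : Nat.gcd d1 d2 = 1)
    (htr : d2 * n₁ + d1 * n₃ = (d1 + d2) * n₂)
    {n : ℕ} (hn : inS n₁ n₂ n₃ n) :
    modeFreq n₁ n₂ n₃ (n + (d1 + d2) * n₂) = modeFreq n₁ n₂ n₃ n + 1 := by
  have hpos := modeFreq_pos h1 h2 h3 hn
  obtain ⟨ℓ, hℓ⟩ := modeFreq_mem n₁ n₂ n₃ n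
  apply le_antisymm
  · obtain ⟨L, hL⟩ := modeFreq_mem n₁ n₂ n₃ (n + (d1 + d2) * n₂)
    rw [← hL]
    calc fmul n₁ n₂ n₃ (n + (d1 + d2) * n₂) L
        ≤ fmul n₁ n₂ n₃ n (L - (d1 + d2)) + 1 :=
          upper_bound h1 h2 h3 hδ hd1p hd2p e1 e2 hco htr
      _ ≤ modeFreq n₁ n₂ n₃ n + 1 := by
          have := fmul_le_modeFreq n₁ n₂ n₃ n (L - (d1 + d2))
          omega
  · have hne : ((Zf n₁ n₂ n₃ n).filter (fun a => len a = ℓ)).Nonempty := by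
      apply Finset.card_pos.1
      show 0 < fmul n₁ n₂ n₃ n ℓ
      omega
    calc modeFreq n₁ n₂ n₃ n + 1 = fmul n₁ n₂ n₃ n ℓ + 1 := by omega
      _ ≤ fmul n₁ n₂ n₃ (n + (d1 + d2) * n₂) (ℓ + (d1 + d2)) :=
          lower_bound h1 h2 h3 htr (by omega) hne
      _ ≤ modeFreq n₁ n₂ n₃ (n + (d1 + d2) * n₂) := fmul_le_modeFreq _ _ _ _ _

lemma inS_add_t {n₁ n₂ n₃ d1 d2 : ℕ} (htr : d2 * n₁ + d1 * n₃ = (d1 + d2) * n₂)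
    {n : ℕ} (hn : inS n₁ n₂ n₃ n) : inS n₁ n₂ n₃ (n + (d1 + d2) * n₂) := by
  obtain ⟨a₁, a₂, a₃, h⟩ := hn
  exact ⟨a₁ + d2, a₂, a₃ + d1, by rw [add_mul, add_mul]; linarith [h, htr]⟩

/-- There is a t-periodic function c₀ : ℕ → ℚ with ν(n) = n/t + c₀(n) for all n ∈ S. -/
theorem mode_freq_quasilinear (n₁ n₂ n₃ : ℕ) (h₀ : 0 < n₁) (h₁ : n₁ < n₂) (h₂ : n₂ < n₃)
    (hg : Nat.gcd n₁ (Nat.gcd n₂ n₃) = 1)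
    (δ t : ℕ) (hδ : δ = Nat.gcd (n₂ - n₁) (n₃ - n₂)) (ht : t = n₂ * (n₃ - n₁) / δ) :
    ∃ c₀ : ℕ → ℚ, (∀ n : ℕ, c₀ (n + t) = c₀ n) ∧
      ∀ n : ℕ, inS n₁ n₂ n₃ n →
        (modeFreq n₁ n₂ n₃ n : ℚ) = (n : ℚ) / (t : ℚ) + c₀ n := by
  classical
  have h2 : 0 < n₂ := by omega
  have h3 : 0 < n₃ := by omega
  have hδpos : 0 < δ := by
    rw [hδ]
    exact Nat.gcd_pos_of_pos_left _ (by omega)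
  have hdvd1 : δ ∣ n₂ - n₁ := hδ ▸ Nat.gcd_dvd_left _ _
  have hdvd2 : δ ∣ n₃ - n₂ := hδ ▸ Nat.gcd_dvd_right _ _
  obtain ⟨d1, hd1⟩ := hdvd1
  obtain ⟨d2, hd2⟩ := hdvd2
  have e1 : n₂ = n₁ + δ * d1 := by omega
  have e2 : n₃ = n₂ + δ * d2 := by omega
  have hd1p : 0 < d1 := by
    rcases Nat.eq_zero_or_pos d1 with h | h
    · subst h; simp at hd1; omega
    · exact h
  have hd2p : 0 < d2 := by
    rcases Nat.eq_zero_or_pos d2 with h | h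
    · subst h; simp at hd2; omega
    · exact h
  have hco : Nat.gcd d1 d2 = 1 := by
    have h := Nat.coprime_div_gcd_div_gcd (m := n₂ - n₁) (n := n₃ - n₂) (hδ ▸ hδpos)
    unfold Nat.Coprime at h
    rw [← hδ, hd1, hd2, Nat.mul_div_cancel_left _ hδpos, Nat.mul_div_cancel_left _ hδpos] at h
    exact h
  have htr : d2 * n₁ + d1 * n₃ = (d1 + d2) * n₂ := by
    have e1' : (n₂ : ℤ) = n₁ + δ * d1 := by exact_mod_cast e1
    have e2' : (n₃ : ℤ) = n₂ + δ * d2 := by exact_mod_cast e2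
    have : (d2 : ℤ) * n₁ + d1 * n₃ = ((d1 : ℤ) + d2) * n₂ := by
      linear_combination (-(d2 : ℤ)) * e1' + (d1 : ℤ) * e2'
    exact_mod_cast this
  have ht' : t = (d1 + d2) * n₂ := by
    have h31 : n₃ - n₁ = (n₃ - n₂) + (n₂ - n₁) := by omega
    rw [ht, h31, hd1, hd2, ← Nat.mul_add]
    rw [mul_left_comm, Nat.mul_div_cancel_left _ hδpos, mul_comm]
    congr 1
    omega
  have htpos : 0 < t := by rw [ht']; positivity
  refine ⟨fun m => if h : {x | inS n₁ n₂ n₃ x ∧ x % t = m % t}.Nonempty then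
      ((modeFreq n₁ n₂ n₃ (sInf {x | inS n₁ n₂ n₃ x ∧ x % t = m % t}) : ℚ)
        - ((sInf {x | inS n₁ n₂ n₃ x ∧ x % t = m % t} : ℕ) : ℚ) / t) else 0, ?_, ?_⟩
  · intro m
    simp only [Nat.add_mod_right]
  · intro n hn
    have hset : {x | inS n₁ n₂ n₃ x ∧ x % t = n % t}.Nonempty := ⟨n, hn, rfl⟩
    beta_reduce
    rw [dif_pos hset]
    set n₀ := sInf {x | inS n₁ n₂ n₃ x ∧ x % t = n % t} with hn₀
    have hmem : inS n₁ n₂ n₃ n₀ ∧ n₀ % t = n % t := Nat.sInf_mem hset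
    have hle : n₀ ≤ n := Nat.sInf_le ⟨hn, rfl⟩
    have hdvd : t ∣ n - n₀ := (Nat.modEq_iff_dvd' hle).mp hmem.2
    obtain ⟨k, hk⟩ := hdvd
    have hnk : n = n₀ + t * k := by omega
    have claim : ∀ j : ℕ, inS n₁ n₂ n₃ (n₀ + t * j) ∧
        modeFreq n₁ n₂ n₃ (n₀ + t * j) = modeFreq n₁ n₂ n₃ n₀ + j := by
      intro j
      induction j with
      | zero => simpa using hmem.1
      | succ j ih =>
        have e : n₀ + t * (j + 1) = (n₀ + t * j) + (d1 + d2) * n₂ := by rw [ht']; ring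
        rw [e]
        refine ⟨inS_add_t htr ih.1, ?_⟩
        rw [nu_step h₀ h2 h3 hδpos hd1p hd2p e1 e2 hco htr ih.1, ih.2]
        omega
    have hfin := (claim k).2
    rw [hnk, hfin]
    have htQ : (t : ℚ) ≠ 0 := by positivity
    push_cast
    field_simp
    ring
end

section
/- For every n ∈ S, the set of mode lengths satisfies γ(n + t) = {m + t/n₂ : m ∈ γ(n)}, i.e., adding the trade element t to n translates the set of mode lengths by the integer t/n₂ = (n₃−n₁)/δ. -/
namespace ModeTradeAux

lemma mem_Zf {n₁ n₂ n₃ N : ℕ} (h₀ : 0 < n₁) (h₁ : n₁ ≤ n₂) (h₂ : n₂ ≤ n₃)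
    {a : ℕ × ℕ × ℕ} :
    a ∈ Zf n₁ n₂ n₃ N ↔ a.1 * n₁ + a.2.1 * n₂ + a.2.2 * n₃ = N := by
  obtain ⟨x, y, z⟩ := a
  simp only [Zf, Finset.mem_filter, Finset.mem_product, Finset.mem_range]
  constructor
  · rintro ⟨-, h⟩; exact h
  · intro h
    have hx : x ≤ x * n₁ := Nat.le_mul_of_pos_right x h₀
    have hy : y ≤ y * n₂ := Nat.le_mul_of_pos_right y (by omega)
    have hz : z ≤ z * n₃ := Nat.le_mul_of_pos_right z (by omega)
    exact ⟨⟨by omega, by omega, by omega⟩, h⟩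

/-- Uniqueness: two factorizations of the same `N` with the same length and both having
second coordinate `< w` coincide. -/
lemma uniq {n₁ n₂ n₃ δ v w N L : ℕ} (h₀ : 0 < n₁) (hδ0 : 0 < δ)
    (hpv : δ * v + n₁ = n₂) (hqw : δ * w + n₁ = n₃)
    (hco : Nat.Coprime v w)
    {b c : ℕ × ℕ × ℕ}
    (hbv : b.1 * n₁ + b.2.1 * n₂ + b.2.2 * n₃ = N)
    (hcv : c.1 * n₁ + c.2.1 * n₂ + c.2.2 * n₃ = N)
    (hbl : len b = L) (hcl : len c = L)
    (hb2 : b.2.1 < w) (hc2 : c.2.1 < w) : b = c := by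
  obtain ⟨b₁, b₂, b₃⟩ := b; obtain ⟨c₁, c₂, c₃⟩ := c
  simp only [len] at hbl hcl
  simp only at hbv hcv hb2 hc2
  have hbvZ : (b₁ : ℤ) * n₁ + b₂ * n₂ + b₃ * n₃ = N := by exact_mod_cast hbv
  have hcvZ : (c₁ : ℤ) * n₁ + c₂ * n₂ + c₃ * n₃ = N := by exact_mod_cast hcv
  have hlZ : (b₁ : ℤ) + b₂ + b₃ = c₁ + c₂ + c₃ := by exact_mod_cast hbl.trans hcl.symm
  have hpZ : (δ : ℤ) * v + n₁ = n₂ := by exact_mod_cast hpv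
  have hqZ : (δ : ℤ) * w + n₁ = n₃ := by exact_mod_cast hqw
  have key : (δ : ℤ) * ((b₂ : ℤ) * v + b₃ * w) = (δ : ℤ) * ((c₂ : ℤ) * v + c₃ * w) := by
    linear_combination hbvZ - hcvZ - (n₁ : ℤ) * hlZ + ((b₂ : ℤ) - c₂) * hpZ
      + ((b₃ : ℤ) - c₃) * hqZ
  have key2 : (b₂ : ℤ) * v + b₃ * w = (c₂ : ℤ) * v + c₃ * w :=
    mul_left_cancel₀ (by exact_mod_cast hδ0.ne') key
  have hdvd : (w : ℤ) ∣ ((b₂ : ℤ) - c₂) * v := ⟨(c₃ : ℤ) - b₃, by linear_combination key2⟩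
  have hcoZ : IsCoprime (w : ℤ) (v : ℤ) := by
    rw [Int.isCoprime_iff_gcd_eq_one]
    exact_mod_cast hco.symm
  have hdvd2 : (w : ℤ) ∣ ((b₂ : ℤ) - c₂) := hcoZ.dvd_of_dvd_mul_right hdvd
  have hb2c2 : (b₂ : ℤ) - c₂ = 0 := Int.eq_zero_of_abs_lt_dvd hdvd2 (by
    rw [abs_sub_lt_iff]; constructor <;> [skip; skip] <;> push_cast <;> omega)
  have hb₂ : b₂ = c₂ := by exact_mod_cast sub_eq_zero.mp hb2c2
  subst hb₂
  have hw0 : 0 < w := by omega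
  have hb₃ : b₃ = c₃ := by
    have : (b₃ : ℤ) * w = (c₃ : ℤ) * w := by linear_combination key2
    have := mul_right_cancel₀ (by exact_mod_cast hw0.ne' : (w : ℤ) ≠ 0) this
    exact_mod_cast this
  subst hb₃
  have hb₁ : b₁ = c₁ := by
    have : b₁ * n₁ = c₁ * n₁ := by omega
    exact Nat.eq_of_mul_eq_mul_right h₀ this
  subst hb₁; rfl

/-- Trade reduction: any factorization can be modified, keeping value and length,
so that its second coordinate is `< w`.  Uses `w*n₂ = u*n₁ + v*n₃` with `u + v = w`. -/
lemma reduce {n₁ n₂ n₃ u v w N : ℕ} (hw : 0 < w)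
    (hkey : w * n₂ = u * n₁ + v * n₃) (huv : u + v = w)
    {b : ℕ × ℕ × ℕ} (hbv : b.1 * n₁ + b.2.1 * n₂ + b.2.2 * n₃ = N) :
    ∃ c : ℕ × ℕ × ℕ, (c.1 * n₁ + c.2.1 * n₂ + c.2.2 * n₃ = N) ∧ len c = len b ∧ c.2.1 < w := by
  obtain ⟨b₁, b₂, b₃⟩ := b
  simp only at hbv
  refine ⟨(b₁ + b₂ / w * u, b₂ % w, b₃ + b₂ / w * v), ?_, ?_, Nat.mod_lt _ hw⟩
  · have hmod : w * (b₂ / w) + b₂ % w = b₂ := Nat.div_add_mod b₂ w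
    simp only
    zify at hbv hkey hmod ⊢
    linear_combination hbv - ((b₂ : ℤ) / w) * hkey + (n₂ : ℤ) * hmod
  · have hmod : w * (b₂ / w) + b₂ % w = b₂ := Nat.div_add_mod b₂ w
    simp only [len]
    zify at huv hmod ⊢
    linear_combination ((b₂ : ℤ) / w) * huv + hmod

end ModeTradeAux

namespace ModeTradeAux

section Count

variable {n₁ n₂ n₃ : ℕ}

/-- The factorizations of `n + t` of length `m + w` with second coordinate `≥ w` are in
bijection with factorizations of `n` of length `m`. -/
lemma card_ge (h₀ : 0 < n₁) (h₁ : n₁ ≤ n₂) (h₂ : n₂ ≤ n₃) {t w n m : ℕ} (htw : t = n₂ * w) :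
    ((Zf n₁ n₂ n₃ (n + t)).filter (fun a => len a = m + w ∧ w ≤ a.2.1)).card
      = fmul n₁ n₂ n₃ n m := by
  rw [fmul]
  refine Finset.card_nbij' (fun a => (a.1, a.2.1 - w, a.2.2))
    (fun a => (a.1, a.2.1 + w, a.2.2)) ?_ ?_ ?_ ?_
  · rintro ⟨a₁, a₂, a₃⟩ ha
    rw [Finset.mem_coe, Finset.mem_filter, mem_Zf h₀ h₁ h₂] at ha
    obtain ⟨hval, hlen, hge⟩ := ha
    simp only [len] at hval hlen hge
    rw [Finset.mem_coe, Finset.mem_filter, mem_Zf h₀ h₁ h₂]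
    simp only [len]
    have hsplit : (a₂ - w) * n₂ + w * n₂ = a₂ * n₂ := by
      rw [← Nat.add_mul, Nat.sub_add_cancel hge]
    have hcomm : w * n₂ = n₂ * w := Nat.mul_comm _ _
    constructor
    · linarith
    · omega
  · rintro ⟨a₁, a₂, a₃⟩ ha
    rw [Finset.mem_coe, Finset.mem_filter, mem_Zf h₀ h₁ h₂] at ha
    obtain ⟨hval, hlen⟩ := ha
    simp only [len] at hval hlen
    rw [Finset.mem_coe, Finset.mem_filter, mem_Zf h₀ h₁ h₂]
    simp only [len]
    have hsplit : (a₂ + w) * n₂ = a₂ * n₂ + w * n₂ := Nat.add_mul _ _ _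
    have hcomm : w * n₂ = n₂ * w := Nat.mul_comm _ _
    refine ⟨by linarith, by omega, by omega⟩
  · rintro ⟨a₁, a₂, a₃⟩ ha
    rw [Finset.mem_coe, Finset.mem_filter] at ha
    obtain ⟨-, -, hge⟩ := ha
    simp only at hge ⊢
    rw [Nat.sub_add_cancel hge]
  · rintro ⟨a₁, a₂, a₃⟩ _
    simp only
    rw [Nat.add_sub_cancel]

/-- Splitting `fmul (n+t) (m+w)` according to whether the second coordinate is `≥ w`. -/
lemma fmul_split (h₀ : 0 < n₁) (h₁ : n₁ ≤ n₂) (h₂ : n₂ ≤ n₃) {t w n m : ℕ} (htw : t = n₂ * w) :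
    fmul n₁ n₂ n₃ (n + t) (m + w)
      = fmul n₁ n₂ n₃ n m
        + ((Zf n₁ n₂ n₃ (n + t)).filter (fun a => len a = m + w ∧ ¬ w ≤ a.2.1)).card := by
  classical
  have hsplit := Finset.card_filter_add_card_filter_not
    (s := (Zf n₁ n₂ n₃ (n + t)).filter (fun a => len a = m + w)) (fun a => w ≤ a.2.1)
  rw [Finset.filter_filter, Finset.filter_filter] at hsplit
  rw [fmul, ← hsplit, card_ge h₀ h₁ h₂ htw]

/-- At most one factorization of a given length has second coordinate `< w`. -/
lemma card_lt_le_one (h₀ : 0 < n₁) (h₁ : n₁ ≤ n₂) (h₂ : n₂ ≤ n₃) {δ v w N L : ℕ}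
    (hδ0 : 0 < δ) (hpv : δ * v + n₁ = n₂) (hqw : δ * w + n₁ = n₃) (hco : Nat.Coprime v w) :
    ((Zf n₁ n₂ n₃ N).filter (fun a => len a = L ∧ ¬ w ≤ a.2.1)).card ≤ 1 := by
  rw [Finset.card_le_one]
  intro b hb c hc
  rw [Finset.mem_filter, mem_Zf h₀ h₁ h₂] at hb hc
  exact uniq h₀ hδ0 hpv hqw hco hb.1 hc.1 hb.2.1 hc.2.1 (by omega) (by omega)

/-- If `n` has a factorization of length `m`, then `n + t` has a factorization of
length `m + w` with second coordinate `< w`. -/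
lemma card_lt_pos (h₀ : 0 < n₁) (h₁ : n₁ ≤ n₂) (h₂ : n₂ ≤ n₃) {t u v w n m : ℕ}
    (htw : t = n₂ * w) (hw0 : 0 < w) (hkey : w * n₂ = u * n₁ + v * n₃) (huv : u + v = w)
    (hm : 0 < fmul n₁ n₂ n₃ n m) :
    0 < ((Zf n₁ n₂ n₃ (n + t)).filter (fun a => len a = m + w ∧ ¬ w ≤ a.2.1)).card := by
  rw [fmul, Finset.card_pos] at hm
  obtain ⟨⟨a₁, a₂, a₃⟩, ha⟩ := hm
  rw [Finset.mem_filter, mem_Zf h₀ h₁ h₂] at ha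
  obtain ⟨hval, hlen⟩ := ha
  simp only [len] at hval hlen
  have hval' : a₁ * n₁ + (a₂ + w) * n₂ + a₃ * n₃ = n + t := by
    have hsplit : (a₂ + w) * n₂ = a₂ * n₂ + w * n₂ := Nat.add_mul _ _ _
    have hcomm : w * n₂ = n₂ * w := Nat.mul_comm _ _
    linarith
  obtain ⟨c, hcval, hclen, hc2⟩ := reduce hw0 hkey huv
    (b := (a₁, a₂ + w, a₃)) (by simpa using hval')
  rw [Finset.card_pos]
  refine ⟨c, ?_⟩
  rw [Finset.mem_filter, mem_Zf h₀ h₁ h₂]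
  refine ⟨hcval, ?_, by omega⟩
  rw [hclen]; simp only [len]; omega

/-- Any length `< w` is attained by at most one factorization of any `N`. -/
lemma fmul_small (h₀ : 0 < n₁) (h₁ : n₁ ≤ n₂) (h₂ : n₂ ≤ n₃) {δ v w N L : ℕ}
    (hδ0 : 0 < δ) (hpv : δ * v + n₁ = n₂) (hqw : δ * w + n₁ = n₃) (hco : Nat.Coprime v w)
    (hL : L < w) : fmul n₁ n₂ n₃ N L ≤ 1 := by
  rw [fmul, Finset.card_le_one]
  intro b hb c hc
  rw [Finset.mem_filter, mem_Zf h₀ h₁ h₂] at hb hc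
  have hb2 : b.2.1 < w := by have := hb.2; simp only [len] at this; omega
  have hc2 : c.2.1 < w := by have := hc.2; simp only [len] at this; omega
  exact uniq h₀ hδ0 hpv hqw hco hb.1 hc.1 hb.2 hc.2 hb2 hc2

lemma bddAbove_fmul (n : ℕ) : BddAbove (Set.range (fmul n₁ n₂ n₃ n)) := by
  refine ⟨(Zf n₁ n₂ n₃ n).card, ?_⟩
  rintro x ⟨ℓ, rfl⟩
  exact Finset.card_filter_le _ _

lemma le_modeFreq (n ℓ : ℕ) : fmul n₁ n₂ n₃ n ℓ ≤ modeFreq n₁ n₂ n₃ n :=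
  le_csSup (bddAbove_fmul n) ⟨ℓ, rfl⟩

lemma exists_modeFreq (n : ℕ) : ∃ ℓ, fmul n₁ n₂ n₃ n ℓ = modeFreq n₁ n₂ n₃ n := by
  have h := Nat.sSup_mem (Set.range_nonempty (fmul n₁ n₂ n₃ n)) (bddAbove_fmul n)
  exact h

end Count

end ModeTradeAux

open ModeTradeAux in
/-- For n ∈ S, the set of mode lengths satisfies γ(n + t) = {m + t/n₂ : m ∈ γ(n)}. -/
theorem mode_set_add_trade (n₁ n₂ n₃ : ℕ) (h₀ : 0 < n₁) (h₁ : n₁ < n₂) (h₂ : n₂ < n₃)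
    (hg : Nat.gcd n₁ (Nat.gcd n₂ n₃) = 1)
    (δ t : ℕ) (hδ : δ = Nat.gcd (n₂ - n₁) (n₃ - n₂)) (ht : t = n₂ * (n₃ - n₁) / δ)
    (n : ℕ) (hn : inS n₁ n₂ n₃ n) :
    modeSet n₁ n₂ n₃ (n + t) = (fun m => m + t / n₂) '' modeSet n₁ n₂ n₃ n := by
  classical
  have h₁' : n₁ ≤ n₂ := le_of_lt h₁
  have h₂' : n₂ ≤ n₃ := le_of_lt h₂
  obtain ⟨p, hpn, hp0⟩ : ∃ p, n₂ = n₁ + p ∧ 0 < p := ⟨n₂ - n₁, by omega, by omega⟩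
  obtain ⟨q, hqn, hpq⟩ : ∃ q, n₃ = n₁ + q ∧ p < q := ⟨n₃ - n₁, by omega, by omega⟩
  have hδ' : δ = Nat.gcd p (q - p) := by rw [hδ]; congr 1 <;> omega
  have hgcdpq : Nat.gcd p q = δ := by
    have h := Nat.gcd_add_mul_right_right p (q - p) 1
    have hq2 : q - p + 1 * p = q := by omega
    rw [hq2] at h
    rw [h, ← hδ']
  have hδ0 : 0 < δ := by
    rw [← hgcdpq]
    exact Nat.gcd_pos_of_pos_left q hp0
  have hdp : δ ∣ p := hgcdpq ▸ Nat.gcd_dvd_left p q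
  have hdq : δ ∣ q := hgcdpq ▸ Nat.gcd_dvd_right p q
  obtain ⟨v, hv⟩ := hdp
  obtain ⟨w, hw⟩ := hdq
  have hco : Nat.Coprime v w := by
    have h := Nat.coprime_div_gcd_div_gcd (m := p) (n := q) (hgcdpq ▸ hδ0)
    rwa [hgcdpq, hv, hw, Nat.mul_div_cancel_left _ hδ0, Nat.mul_div_cancel_left _ hδ0] at h
  have hv0 : 0 < v := by
    rcases Nat.eq_zero_or_pos v with h | h
    · subst h; simp at hv; omega
    · exact h
  have hvw : v < w := by
    have : δ * v < δ * w := by rw [← hv, ← hw]; omega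
    exact Nat.lt_of_mul_lt_mul_left this
  have hw0 : 0 < w := by omega
  have hwp : w * p = v * q := by
    have h : δ * (w * p) = δ * (v * q) := by
      calc δ * (w * p) = (δ * w) * p := by ring
        _ = q * p := by rw [← hw]
        _ = p * q := Nat.mul_comm _ _
        _ = (δ * v) * q := by rw [← hv]
        _ = δ * (v * q) := by ring
    exact Nat.eq_of_mul_eq_mul_left hδ0 h
  obtain ⟨u, huv⟩ : ∃ u, u + v = w := ⟨w - v, by omega⟩
  have hkey : w * n₂ = u * n₁ + v * n₃ := by
    have hpnZ : (n₂ : ℤ) = n₁ + p := by exact_mod_cast hpn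
    have hqnZ : (n₃ : ℤ) = n₁ + q := by exact_mod_cast hqn
    have hwpZ : (w : ℤ) * p = v * q := by exact_mod_cast hwp
    have huvZ : (u : ℤ) + v = w := by exact_mod_cast huv
    zify
    linear_combination (w : ℤ) * hpnZ - (v : ℤ) * hqnZ + hwpZ - (n₁ : ℤ) * huvZ
  have htw : t = n₂ * w := by
    have hq' : n₃ - n₁ = q := by omega
    rw [ht, hq', hw, show n₂ * (δ * w) = δ * (n₂ * w) by ring, Nat.mul_div_cancel_left _ hδ0]
  have htn : t / n₂ = w := by rw [htw, Nat.mul_div_cancel_left _ (by omega : 0 < n₂)]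
  have hpv : δ * v + n₁ = n₂ := by rw [← hv]; omega
  have hqw : δ * w + n₁ = n₃ := by rw [← hw]; omega
  have Hle : ∀ m : ℕ, fmul n₁ n₂ n₃ (n + t) (m + w) ≤ fmul n₁ n₂ n₃ n m + 1 := by
    intro m
    have h := fmul_split h₀ h₁' h₂' (n := n) (m := m) htw
    have h2 := card_lt_le_one h₀ h₁' h₂' (N := n + t) (L := m + w) hδ0 hpv hqw hco
    omega
  have Hsucc : ∀ m : ℕ, 0 < fmul n₁ n₂ n₃ n m →
      fmul n₁ n₂ n₃ (n + t) (m + w) = fmul n₁ n₂ n₃ n m + 1 := by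
    intro m hm
    have h := fmul_split h₀ h₁' h₂' (n := n) (m := m) htw
    have h2 := card_lt_le_one h₀ h₁' h₂' (N := n + t) (L := m + w) hδ0 hpv hqw hco
    have h3 := card_lt_pos h₀ h₁' h₂' htw hw0 hkey huv hm
    omega
  have Hsmall : ∀ L : ℕ, L < w → fmul n₁ n₂ n₃ (n + t) L ≤ 1 := fun L hL =>
    fmul_small h₀ h₁' h₂' hδ0 hpv hqw hco hL
  have hν1 : 1 ≤ modeFreq n₁ n₂ n₃ n := by
    obtain ⟨a₁, a₂, a₃, ha⟩ := hn
    have hmem : ((a₁, a₂, a₃) : ℕ × ℕ × ℕ) ∈ (Zf n₁ n₂ n₃ n).filter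
        (fun a => len a = len (a₁, a₂, a₃)) := by
      rw [Finset.mem_filter, mem_Zf h₀ h₁' h₂']
      exact ⟨ha, rfl⟩
    have hpos : 0 < fmul n₁ n₂ n₃ n (len (a₁, a₂, a₃)) := Finset.card_pos.mpr ⟨_, hmem⟩
    have hle := le_modeFreq (n₁ := n₁) (n₂ := n₂) (n₃ := n₃) n (len (a₁, a₂, a₃))
    omega
  obtain ⟨m₀, hm₀⟩ := exists_modeFreq (n₁ := n₁) (n₂ := n₂) (n₃ := n₃) n
  have hν' : modeFreq n₁ n₂ n₃ (n + t) = modeFreq n₁ n₂ n₃ n + 1 := by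
    apply le_antisymm
    · obtain ⟨L, hL⟩ := exists_modeFreq (n₁ := n₁) (n₂ := n₂) (n₃ := n₃) (n + t)
      rw [← hL]
      by_cases hLw : L < w
      · have := Hsmall L hLw; omega
      · have heq : L = (L - w) + w := by omega
        rw [heq]
        have h1 := Hle (L - w)
        have h2 := le_modeFreq (n₁ := n₁) (n₂ := n₂) (n₃ := n₃) n (L - w)
        omega
    · have h := Hsucc m₀ (by omega)
      have h2 := le_modeFreq (n₁ := n₁) (n₂ := n₂) (n₃ := n₃) (n + t) (m₀ + w)
      omega
  ext L
  simp only [modeSet, Set.mem_setOf_eq, Set.mem_image]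
  constructor
  · intro hL
    have hLw : ¬ L < w := by
      intro h
      have := Hsmall L h
      omega
    refine ⟨L - w, ?_, by rw [htn]; omega⟩
    have heq : L = (L - w) + w := by omega
    rw [heq] at hL
    have h1 := Hle (L - w)
    have h2 := le_modeFreq (n₁ := n₁) (n₂ := n₂) (n₃ := n₃) n (L - w)
    omega
  · rintro ⟨m, hm, rfl⟩
    rw [htn, Hsucc m (by omega), hm, hν']
end

section
/- Let s = δ·t·n₁n₂n₃, let k ≥ 1, and set a_k = ks/n₃ = kδtn₁n₂, c_k = ks/n₂ = kδtn₁n₃, b_k = ks/n₁ = kδtn₂n₃. Then for every integer x: (1) if a_k ≤ x ≤ c_k, the number of factorizations of ks of length x satisfies f_{ks}(x) ≤ (n₂n₃/(t(n₃−n₂)))·(x − a_k) + 1; (2) if c_k ≤ x ≤ b_k, then f_{ks}(x) ≤ (n₁n₂/(t(n₂−n₁)))·(b_k − x) + 1. -/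

lemma count_pairs (T : Finset (ℕ × ℕ)) (p q M : ℕ) (hp : 0 < p) (hq : 0 < q)
    (hT : ∀ ab ∈ T, ab.1 * p + ab.2 * q = M) :
    T.card ≤ M / ((p / Nat.gcd p q) * q) + 1 := by
  set g := Nat.gcd p q with hg
  have hgpos : 0 < g := Nat.gcd_pos_of_pos_left _ hp
  have hgp : g ∣ p := Nat.gcd_dvd_left p q
  have hgq : g ∣ q := Nat.gcd_dvd_right p q
  set L := (p / g) * q with hL
  have hLpos : 0 < L := Nat.mul_pos (Nat.div_pos (Nat.le_of_dvd hp hgp) hgpos) hq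
  -- key: pairwise second-coordinate equality from equal quotients
  have key : ∀ a ∈ T, ∀ b ∈ T, b.2 ≤ a.2 → (a.2 * q) / L = (b.2 * q) / L → a.2 = b.2 := by
    intro a ha b hb hle hdq
    have ea := hT a ha
    have eb := hT b hb
    -- (a.2 - b.2) * q = (b.1 - a.1) * p
    have ha1 : a.1 * p ≤ b.1 * p := by nlinarith [Nat.mul_le_mul_right q hle]
    have hdiff : (a.2 - b.2) * q = (b.1 - a.1) * p := by
      have h1 : a.1 ≤ b.1 := Nat.le_of_mul_le_mul_right ha1 hp
      zify [hle, h1]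
      push_cast at ea eb
      linarith
    -- p/g divides a.2 - b.2
    have hcop : Nat.Coprime (p / g) (q / g) := Nat.coprime_div_gcd_div_gcd hgpos
    have hdvd1 : (p / g) ∣ (a.2 - b.2) * (q / g) := by
      refine ⟨b.1 - a.1, ?_⟩
      apply Nat.eq_of_mul_eq_mul_left hgpos
      calc g * ((a.2 - b.2) * (q / g)) = (a.2 - b.2) * (g * (q / g)) := by ring
        _ = (a.2 - b.2) * q := by rw [Nat.mul_div_cancel' hgq]
        _ = (b.1 - a.1) * p := hdiff
        _ = (b.1 - a.1) * (g * (p / g)) := by rw [Nat.mul_div_cancel' hgp]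
        _ = g * (p / g * (b.1 - a.1)) := by ring
    have hdvd2 : (p / g) ∣ (a.2 - b.2) := hcop.dvd_of_dvd_mul_right hdvd1
    obtain ⟨c, hc⟩ := hdvd2
    -- a.2 * q = b.2 * q + c * L
    have hql : a.2 * q = b.2 * q + c * L := by
      have h5 : (a.2 - b.2) * q = (p / g * c) * q := by rw [hc]
      have h6 : (p / g * c) * q = c * L := by rw [hL]; ring
      rw [Nat.sub_mul, h6] at h5
      have hbq : b.2 * q ≤ a.2 * q := Nat.mul_le_mul_right q hle
      omega
    rw [hql, Nat.add_mul_div_right _ _ hLpos] at hdq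
    have hc0 : c = 0 := by omega
    subst hc0
    simp at hc
    omega
  have hmaps : ∀ ab ∈ T, (fun ab : ℕ × ℕ => ab.2 * q / L) ab ∈ Finset.range (M / L + 1) := by
    intro ab hab
    simp only [Finset.mem_range]
    have h1 : ab.2 * q ≤ M := by have := hT ab hab; omega
    have := Nat.div_le_div_right (c := L) h1
    omega
  have hinj : Set.InjOn (fun ab : ℕ × ℕ => ab.2 * q / L) T := by
    intro a ha b hb hdq
    simp only at hdq
    have h2 : a.2 = b.2 := by
      rcases le_total b.2 a.2 with h | h
      · exact key a ha b hb h hdq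
      · exact (key b hb a ha h hdq.symm).symm
    have ea := hT a ha
    have eb := hT b hb
    have h1 : a.1 = b.1 := by
      have : a.1 * p = b.1 * p := by rw [h2] at ea; omega
      exact Nat.eq_of_mul_eq_mul_right hp this
    exact Prod.ext h1 h2
  have := Finset.card_le_card_of_injOn _ hmaps hinj
  simpa using this

/-- Upper bound on length multiplicities of ks: linear in x − aₖ on [aₖ, cₖ] and
linear in bₖ − x on [cₖ, bₖ]. -/
theorem multiplicity_upper_bound (n₁ n₂ n₃ : ℕ) (h₀ : 0 < n₁) (h₁ : n₁ < n₂) (h₂ : n₂ < n₃)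
    (hg : Nat.gcd n₁ (Nat.gcd n₂ n₃) = 1)
    (δ t : ℕ) (hδ : δ = Nat.gcd (n₂ - n₁) (n₃ - n₂)) (ht : t = n₂ * (n₃ - n₁) / δ)
    (s : ℕ) (hs : s = δ * t * n₁ * n₂ * n₃) (k : ℕ) (hk : 1 ≤ k)
    (aₖ cₖ bₖ : ℕ) (ha : aₖ = k * δ * t * n₁ * n₂) (hc : cₖ = k * δ * t * n₁ * n₃)
    (hb : bₖ = k * δ * t * n₂ * n₃) :
    ∀ x : ℕ,
      (aₖ ≤ x → x ≤ cₖ →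
        (fmul n₁ n₂ n₃ (k * s) x : ℚ) ≤
          ((n₂ : ℚ) * (n₃ : ℚ)) / ((t : ℚ) * ((n₃ : ℚ) - (n₂ : ℚ))) * ((x : ℚ) - (aₖ : ℚ)) + 1) ∧
      (cₖ ≤ x → x ≤ bₖ →
        (fmul n₁ n₂ n₃ (k * s) x : ℚ) ≤
          ((n₁ : ℚ) * (n₂ : ℚ)) / ((t : ℚ) * ((n₂ : ℚ) - (n₁ : ℚ))) * ((bₖ : ℚ) - (x : ℚ)) + 1) := by
  have h13 : n₁ < n₃ := h₁.trans h₂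
  have hδ12 : δ ∣ n₂ - n₁ := hδ ▸ Nat.gcd_dvd_left _ _
  have hδ32 : δ ∣ n₃ - n₂ := hδ ▸ Nat.gcd_dvd_right _ _
  have hδ13 : δ ∣ n₃ - n₁ := by
    have he : n₃ - n₁ = (n₂ - n₁) + (n₃ - n₂) := by omega
    rw [he]; exact Nat.dvd_add hδ12 hδ32
  have hδpos : 0 < δ := by rw [hδ]; exact Nat.gcd_pos_of_pos_left _ (by omega)
  have htδ : t * δ = n₂ * (n₃ - n₁) := by
    rw [ht]; exact Nat.div_mul_cancel (Dvd.dvd.mul_left hδ13 n₂)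
  have htpos : 0 < t := by
    have h1 : 0 < n₂ * (n₃ - n₁) := Nat.mul_pos (by omega) (by omega)
    nlinarith
  -- d = (n₃ - n₁)/δ, d₂ = (n₂ - n₁)/δ
  obtain ⟨d, hd⟩ := hδ13
  obtain ⟨d₂, hd₂⟩ := hδ12
  have hdpos : 0 < d := by
    rcases Nat.eq_zero_or_pos d with h | h
    · rw [h] at hd; omega
    · exact h
  have hd₂pos : 0 < d₂ := by
    rcases Nat.eq_zero_or_pos d₂ with h | h
    · rw [h] at hd₂; omega
    · exact h
  have htd : t = n₂ * d := by
    apply Nat.eq_of_mul_eq_mul_right hδpos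
    rw [htδ, hd]; ring
  have hks3 : k * s = aₖ * n₃ := by rw [hs, ha]; ring
  have hks1 : k * s = bₖ * n₁ := by rw [hs, hb]; ring
  -- rational basic facts
  have hq1 : (0:ℚ) < n₁ := by exact_mod_cast h₀
  have hq2 : (0:ℚ) < n₂ := by exact_mod_cast h₀.trans h₁
  have hq3 : (0:ℚ) < n₃ := by exact_mod_cast h₀.trans h13
  have hqd : (0:ℚ) < d := by exact_mod_cast hdpos
  have hqd₂ : (0:ℚ) < d₂ := by exact_mod_cast hd₂pos
  have hqδ : (0:ℚ) < δ := by exact_mod_cast hδpos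
  have hqt : (0:ℚ) < t := by exact_mod_cast htpos
  have hq32 : (0:ℚ) < (n₃:ℚ) - n₂ := by
    have : (n₂:ℚ) < n₃ := by exact_mod_cast h₂
    linarith
  have hq21 : (0:ℚ) < (n₂:ℚ) - n₁ := by
    have : (n₁:ℚ) < n₂ := by exact_mod_cast h₁
    linarith
  have hq31 : ((n₃:ℚ) - n₁) = (d:ℚ) * δ := by
    have h' : ((n₃ - n₁ : ℕ):ℚ) = (d:ℚ) * δ := by rw [hd]; push_cast; ring
    rw [← h', Nat.cast_sub h13.le]
  have hq21' : ((n₂:ℚ) - n₁) = (d₂:ℚ) * δ := by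
    have h' : ((n₂ - n₁ : ℕ):ℚ) = (d₂:ℚ) * δ := by rw [hd₂]; push_cast; ring
    rw [← h', Nat.cast_sub h₁.le]
  have hqtd : (t:ℚ) = (n₂:ℚ) * d := by exact_mod_cast htd
  intro x
  constructor
  · -- case 1 : aₖ ≤ x ≤ cₖ
    intro hax _
    set S := (Zf n₁ n₂ n₃ (k*s)).filter (fun a => len a = x) with hS
    have hfm : fmul n₁ n₂ n₃ (k*s) x = S.card := rfl
    have hksle : k * s ≤ n₃ * x := by
      rw [hks3]
      calc aₖ * n₃ ≤ x * n₃ := Nat.mul_le_mul_right _ hax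
        _ = n₃ * x := Nat.mul_comm _ _
    set M : ℕ := n₃ * x - k * s with hM
    set T := S.image (fun z : ℕ × ℕ × ℕ => (z.1, z.2.1)) with hT
    have hST : T.card = S.card := by
      apply Finset.card_image_of_injOn
      intro z hz w hw hzw
      simp only [Finset.mem_coe, hS, Finset.mem_filter] at hz hw
      have hz2 := hz.2; have hw2 := hw.2
      simp only [len] at hz2 hw2
      simp only [Prod.mk.injEq] at hzw
      obtain ⟨e1, e2⟩ := hzw
      have e3 : z.2.2 = w.2.2 := by omega
      exact Prod.ext e1 (Prod.ext e2 e3)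
    have hTe : ∀ ab ∈ T, ab.1 * (n₃ - n₁) + ab.2 * (n₃ - n₂) = M := by
      intro ab hab
      obtain ⟨z, hzS, hzab⟩ := Finset.mem_image.mp hab
      simp only [hS, Finset.mem_filter, Zf] at hzS
      obtain ⟨⟨_, hzeq⟩, hlen⟩ := hzS
      simp only [len] at hlen
      have hz' : (z.1:ℤ)*n₁ + (z.2.1:ℤ)*n₂ + (z.2.2:ℤ)*n₃ = (k:ℤ)*s := by exact_mod_cast hzeq
      have hl' : (z.1:ℤ) + (z.2.1:ℤ) + (z.2.2:ℤ) = (x:ℤ) := by exact_mod_cast hlen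
      have hkey : (z.1:ℤ) * ((n₃:ℤ)-n₁) + (z.2.1:ℤ) * ((n₃:ℤ)-n₂) = (n₃:ℤ)*x - (k:ℤ)*s := by
        linear_combination (n₃:ℤ)*hl' - hz'
      rw [← hzab]
      simp only
      rw [hM]
      zify [h13.le, h₂.le, hksle]
      linarith [hkey]
    have hcount := count_pairs T (n₃-n₁) (n₃-n₂) M (by omega) (by omega) hTe
    have hgcd : Nat.gcd (n₃-n₁) (n₃-n₂) = δ := by
      rw [hδ]
      have he : n₃ - n₁ = (n₂ - n₁) + (n₃ - n₂) := by omega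
      rw [he, Nat.gcd_add_self_left]
    rw [hgcd] at hcount
    have hdq : (n₃ - n₁) / δ = d := by rw [hd]; exact Nat.mul_div_cancel_left d hδpos
    rw [hdq] at hcount
    have hLc : ((d * (n₃ - n₂) : ℕ):ℚ) = (d:ℚ) * ((n₃:ℚ) - n₂) := by
      push_cast [Nat.cast_sub h₂.le]; ring
    have hMc : ((M:ℕ):ℚ) = (n₃:ℚ)*x - (aₖ:ℚ)*n₃ := by
      rw [hM, Nat.cast_sub hksle, hks3]; push_cast; ring
    have hL0 : (0:ℚ) < ((d * (n₃ - n₂) : ℕ):ℚ) := by rw [hLc]; positivity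
    have hML : ((M:ℕ):ℚ) / ((d * (n₃ - n₂) : ℕ):ℚ) =
        ((n₂ : ℚ) * (n₃ : ℚ)) / ((t : ℚ) * ((n₃ : ℚ) - (n₂ : ℚ))) * ((x : ℚ) - (aₖ : ℚ)) := by
      rw [hLc, hMc, hqtd]
      field_simp
    calc (fmul n₁ n₂ n₃ (k*s) x : ℚ) = (T.card : ℚ) := by rw [hfm, hST]
      _ ≤ ((M / (d * (n₃ - n₂)) + 1 : ℕ) : ℚ) := by exact_mod_cast hcount
      _ ≤ ((M:ℕ):ℚ) / ((d * (n₃ - n₂) : ℕ):ℚ) + 1 := by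
          push_cast
          have := Nat.cast_div_le (α := ℚ) (m := M) (n := d * (n₃ - n₂))
          push_cast at this
          linarith
      _ = _ + 1 := by rw [hML]
  · -- case 2 : cₖ ≤ x ≤ bₖ
    intro _ hxb
    set S := (Zf n₁ n₂ n₃ (k*s)).filter (fun a => len a = x) with hS
    have hfm : fmul n₁ n₂ n₃ (k*s) x = S.card := rfl
    have hksle : n₁ * x ≤ k * s := by
      rw [hks1]
      calc n₁ * x ≤ n₁ * bₖ := Nat.mul_le_mul_left _ hxb
        _ = bₖ * n₁ := Nat.mul_comm _ _
    set M : ℕ := k * s - n₁ * x with hM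
    set T := S.image (fun z : ℕ × ℕ × ℕ => (z.2.1, z.2.2)) with hT
    have hST : T.card = S.card := by
      apply Finset.card_image_of_injOn
      intro z hz w hw hzw
      simp only [Finset.mem_coe, hS, Finset.mem_filter] at hz hw
      have hz2 := hz.2; have hw2 := hw.2
      simp only [len] at hz2 hw2
      simp only [Prod.mk.injEq] at hzw
      obtain ⟨e2, e3⟩ := hzw
      have e1 : z.1 = w.1 := by omega
      exact Prod.ext e1 (Prod.ext e2 e3)
    have hTe : ∀ ab ∈ T, ab.1 * (n₂ - n₁) + ab.2 * (n₃ - n₁) = M := by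
      intro ab hab
      obtain ⟨z, hzS, hzab⟩ := Finset.mem_image.mp hab
      simp only [hS, Finset.mem_filter, Zf] at hzS
      obtain ⟨⟨_, hzeq⟩, hlen⟩ := hzS
      simp only [len] at hlen
      have hz' : (z.1:ℤ)*n₁ + (z.2.1:ℤ)*n₂ + (z.2.2:ℤ)*n₃ = (k:ℤ)*s := by exact_mod_cast hzeq
      have hl' : (z.1:ℤ) + (z.2.1:ℤ) + (z.2.2:ℤ) = (x:ℤ) := by exact_mod_cast hlen
      have hkey : (z.2.1:ℤ) * ((n₂:ℤ)-n₁) + (z.2.2:ℤ) * ((n₃:ℤ)-n₁) = (k:ℤ)*s - (n₁:ℤ)*x := by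
        linear_combination hz' - (n₁:ℤ)*hl'
      rw [← hzab]
      simp only
      rw [hM]
      zify [h₁.le, h13.le, hksle]
      linarith [hkey]
    have hcount := count_pairs T (n₂-n₁) (n₃-n₁) M (by omega) (by omega) hTe
    have hgcd : Nat.gcd (n₂-n₁) (n₃-n₁) = δ := by
      rw [hδ]
      have he : n₃ - n₁ = (n₃ - n₂) + (n₂ - n₁) := by omega
      rw [he, Nat.gcd_add_self_right]
    rw [hgcd] at hcount
    have hdq : (n₂ - n₁) / δ = d₂ := by rw [hd₂]; exact Nat.mul_div_cancel_left d₂ hδpos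
    rw [hdq] at hcount
    have hLc : ((d₂ * (n₃ - n₁) : ℕ):ℚ) = (d₂:ℚ) * ((n₃:ℚ) - n₁) := by
      push_cast [Nat.cast_sub h13.le]; ring
    have hMc : ((M:ℕ):ℚ) = (n₁:ℚ)*bₖ - (n₁:ℚ)*x := by
      rw [hM, Nat.cast_sub hksle, hks1]; push_cast; ring
    have hL0 : (0:ℚ) < ((d₂ * (n₃ - n₁) : ℕ):ℚ) := by
      rw [hLc]
      have : (n₁:ℚ) < n₃ := by exact_mod_cast h13
      have h31 : (0:ℚ) < (n₃:ℚ) - n₁ := by linarith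
      positivity
    have hML : ((M:ℕ):ℚ) / ((d₂ * (n₃ - n₁) : ℕ):ℚ) =
        ((n₁ : ℚ) * (n₂ : ℚ)) / ((t : ℚ) * ((n₂ : ℚ) - (n₁ : ℚ))) * ((bₖ : ℚ) - (x : ℚ)) := by
      rw [hLc, hMc, hqtd, hq21']
      rw [show ((n₃:ℚ) - n₁) = (d:ℚ) * δ from hq31]
      field_simp
    calc (fmul n₁ n₂ n₃ (k*s) x : ℚ) = (T.card : ℚ) := by rw [hfm, hST]
      _ ≤ ((M / (d₂ * (n₃ - n₁)) + 1 : ℕ) : ℚ) := by exact_mod_cast hcount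
      _ ≤ ((M:ℕ):ℚ) / ((d₂ * (n₃ - n₁) : ℕ):ℚ) + 1 := by
          push_cast
          have := Nat.cast_div_le (α := ℚ) (m := M) (n := d₂ * (n₃ - n₁))
          push_cast at this
          linarith
      _ = _ + 1 := by rw [hML]
end

section
/- Let s = δ·t·n₁n₂n₃ and, for k ≥ 1, set a_k = ks/n₃, c_k = ks/n₂, b_k = ks/n₁. There exists a constant C (independent of k) such that for every integer k ≥ 1: (1) for every integer x with a_k ≤ x < c_k and x ≡ a_k (mod δ), writing x = a_k + t(n₃−n₂)·j + ℓ with integers j ≥ 0 and 0 ≤ ℓ < t(n₃−n₂), the number of factorizations of ks of length x satisfies f_{ks}(x) ≥ n₂n₃(j − C) + 1; (2) for every integer x with c_k < x ≤ b_k and x ≡ b_k (mod δ), writing x = b_k − t(n₂−n₁)·j − ℓ with integers j ≥ 0 and 0 ≤ ℓ < t(n₂−n₁), one has f_{ks}(x) ≥ n₁n₂(j − C) + 1. -/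
lemma dio (u v V W : ℕ) (hco : Nat.Coprime u v) (hv : 0 < v)
    (hW : V + v * u ≤ W) : ∃ a b : ℕ, a < v ∧ a * u + b * v + V = W := by
  have hvZ : (0:ℤ) < (v:ℤ) := by exact_mod_cast hv
  set m : ℤ := (W : ℤ) - (V : ℤ) with hm
  have hbez : (u:ℤ) * Nat.gcdA u v + (v:ℤ) * Nat.gcdB u v = 1 := by
    have h := Nat.gcd_eq_gcd_ab u v
    rw [Nat.Coprime] at hco
    rw [hco] at h
    push_cast at h
    linarith
  set A : ℤ := (m * Nat.gcdA u v) % (v:ℤ) with hA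
  have hA0 : 0 ≤ A := Int.emod_nonneg _ (ne_of_gt hvZ)
  have hAv : A < (v:ℤ) := Int.emod_lt_of_pos _ hvZ
  have h1 : (v:ℤ) ∣ m * Nat.gcdA u v - A := Int.dvd_self_sub_of_emod_eq rfl
  obtain ⟨e, he⟩ := h1
  have hdvd : (v:ℤ) ∣ m - A * u :=
    ⟨m * Nat.gcdB u v + e * u, by linear_combination u * he - m * hbez⟩
  obtain ⟨f, hf⟩ := hdvd
  have hvu : (v:ℤ) * u ≤ m := by
    have : (V:ℤ) + v*u ≤ W := by exact_mod_cast hW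
    linarith
  have hAu : A * u ≤ m := by
    calc A * u ≤ v * u := by
          apply mul_le_mul_of_nonneg_right (le_of_lt hAv) (by positivity)
      _ ≤ m := hvu
  have hf0 : 0 ≤ f := by nlinarith
  refine ⟨A.toNat, f.toNat, ?_, ?_⟩
  · exact_mod_cast (Int.toNat_lt' (by omega)).mpr hAv
  · have : (A.toNat : ℤ) * u + f.toNat * v + V = W := by
      rw [Int.toNat_of_nonneg hA0, Int.toNat_of_nonneg hf0]
      linarith [hf]
    exact_mod_cast this

lemma count_lb (n₁ n₂ n₃ p q r n x N A₁ A₂ A₃ : ℕ)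
    (h1 : 0 < n₁) (h2 : 0 < n₂) (h3 : 0 < n₃) (hp : 0 < p)
    (hq : q = p + r) (hpq : p * n₁ + r * n₃ = q * n₂)
    (hv : A₁ * n₁ + A₂ * n₂ + A₃ * n₃ = n) (hl : A₁ + A₂ + A₃ = x)
    (hA1 : N * p ≤ A₁) (hA3 : N * r ≤ A₃) :
    N + 1 ≤ fmul n₁ n₂ n₃ n x := by
  have hv' : (A₁:ℤ) * n₁ + A₂ * n₂ + A₃ * n₃ = n := by exact_mod_cast hv
  have hl' : (A₁:ℤ) + A₂ + A₃ = x := by exact_mod_cast hl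
  have hpq' : (p:ℤ) * n₁ + r * n₃ = q * n₂ := by exact_mod_cast hpq
  have hq' : (q:ℤ) = p + r := by exact_mod_cast hq
  set g : ℕ → ℕ × ℕ × ℕ := fun i => (A₁ - N*p + i*p, A₂ + N*q - i*q, A₃ - N*r + i*r) with hg
  have hmem : ∀ i ∈ Finset.range (N+1),
      g i ∈ (Zf n₁ n₂ n₃ n).filter (fun a => len a = x) := by
    intro i hi
    rw [Finset.mem_range] at hi
    have hiN : i ≤ N := by omega
    have hiq : i * q ≤ A₂ + N * q := by
      have : i * q ≤ N * q := Nat.mul_le_mul_right _ hiN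
      omega
    have hval : (A₁ - N*p + i*p) * n₁ + (A₂ + N*q - i*q) * n₂ + (A₃ - N*r + i*r) * n₃ = n := by
      zify [hA1, hA3, hiq]
      linear_combination hv' + ((i:ℤ) - N) * hpq'
    have hlen : (A₁ - N*p + i*p) + (A₂ + N*q - i*q) + (A₃ - N*r + i*r) = x := by
      zify [hA1, hA3, hiq]
      linear_combination hl' + ((N:ℤ) - i) * hq'
    simp only [Zf, Finset.mem_filter, Finset.mem_product, Finset.mem_range, hg]
    refine ⟨⟨⟨?_, ?_, ?_⟩, hval⟩, hlen⟩
    · have h : (A₁ - N*p + i*p) * n₁ ≤ n := by omega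
      have : (A₁ - N*p + i*p) ≤ (A₁ - N*p + i*p) * n₁ := Nat.le_mul_of_pos_right _ h1
      omega
    · have h : (A₂ + N*q - i*q) * n₂ ≤ n := by omega
      have : (A₂ + N*q - i*q) ≤ (A₂ + N*q - i*q) * n₂ := Nat.le_mul_of_pos_right _ h2
      omega
    · have h : (A₃ - N*r + i*r) * n₃ ≤ n := by omega
      have : (A₃ - N*r + i*r) ≤ (A₃ - N*r + i*r) * n₃ := Nat.le_mul_of_pos_right _ h3
      omega
  have hinj : Set.InjOn g (Finset.range (N+1)) := by
    intro i _ i' _ h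
    have h1 : A₁ - N*p + i*p = A₁ - N*p + i'*p := congrArg (fun z => z.1) h
    have h2 : i * p = i' * p := by omega
    exact Nat.eq_of_mul_eq_mul_right hp h2
  have := Finset.card_le_card_of_injOn g hmem hinj
  simpa [fmul] using this

set_option maxHeartbeats 1000000

/-- Lower bound on length multiplicities of ks: there is a constant C independent of k
such that, writing x = aₖ + t(n₃−n₂)j + ℓ (resp. x = bₖ − t(n₂−n₁)j − ℓ) with
0 ≤ ℓ < t(n₃−n₂) (resp. 0 ≤ ℓ < t(n₂−n₁)), one has f(x) ≥ n₂n₃(j−C)+1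
(resp. f(x) ≥ n₁n₂(j−C)+1). -/
theorem multiplicity_lower_bound (n₁ n₂ n₃ : ℕ) (h₀ : 0 < n₁) (h₁ : n₁ < n₂) (h₂ : n₂ < n₃)
    (hg : Nat.gcd n₁ (Nat.gcd n₂ n₃) = 1)
    (δ t : ℕ) (hδ : δ = Nat.gcd (n₂ - n₁) (n₃ - n₂)) (ht : t = n₂ * (n₃ - n₁) / δ)
    (s : ℕ) (hs : s = δ * t * n₁ * n₂ * n₃)
    (a c b : ℕ → ℕ) (ha : ∀ k, a k = k * δ * t * n₁ * n₂)
    (hc : ∀ k, c k = k * δ * t * n₁ * n₃) (hb : ∀ k, b k = k * δ * t * n₂ * n₃) :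
    ∃ C : ℕ, ∀ k : ℕ, 1 ≤ k →
      (∀ x j ℓ : ℕ, a k ≤ x → x < c k → x ≡ a k [MOD δ] →
        x = a k + t * (n₃ - n₂) * j + ℓ → ℓ < t * (n₃ - n₂) →
        ((n₂ : ℤ) * (n₃ : ℤ)) * ((j : ℤ) - (C : ℤ)) + 1 ≤ (fmul n₁ n₂ n₃ (k * s) x : ℤ)) ∧
      (∀ x j ℓ : ℕ, c k < x → x ≤ b k → x ≡ b k [MOD δ] →
        x + t * (n₂ - n₁) * j + ℓ = b k → ℓ < t * (n₂ - n₁) →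
        ((n₁ : ℤ) * (n₂ : ℤ)) * ((j : ℤ) - (C : ℤ)) + 1 ≤ (fmul n₁ n₂ n₃ (k * s) x : ℤ)) := by
  have h2' : 0 < n₂ := h₀.trans h₁
  have h3' : 0 < n₃ := h2'.trans h₂
  have hδ0 : 0 < δ := by
    rw [hδ]; exact Nat.gcd_pos_of_pos_left _ (by omega)
  obtain ⟨p, hp⟩ : δ ∣ (n₃ - n₂) := hδ ▸ Nat.gcd_dvd_right _ _
  obtain ⟨r, hr⟩ : δ ∣ (n₂ - n₁) := hδ ▸ Nat.gcd_dvd_left _ _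
  have hpn : n₂ + δ * p = n₃ := by omega
  have hrn : n₁ + δ * r = n₂ := by omega
  obtain ⟨q, hq⟩ : ∃ q, q = p + r := ⟨_, rfl⟩
  have hqm : δ * q = δ * p + δ * r := by rw [hq]; ring
  have hqn : n₁ + δ * q = n₃ := by omega
  have hp0 : 0 < p := by
    have h' : 0 < δ * p := by omega
    exact Nat.pos_of_ne_zero (fun h => by simp [h] at h')
  have hr0 : 0 < r := by
    have h' : 0 < δ * r := by omega
    exact Nat.pos_of_ne_zero (fun h => by simp [h] at h')
  have hq0 : 0 < q := by omega
  have ht' : t = n₂ * q := by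
    have hd : n₃ - n₁ = δ * q := by omega
    rw [ht, hd, show n₂ * (δ*q) = δ*(n₂*q) by ring, Nat.mul_div_cancel_left _ hδ0]
  subst ht'
  subst hs
  have hpq_id : p * n₁ + r * n₃ = q * n₂ := by
    have e1 : (n₂:ℤ) + δ*p = n₃ := by exact_mod_cast hpn
    have e2 : (n₁:ℤ) + δ*r = n₂ := by exact_mod_cast hrn
    have hZ : (δ:ℤ) * (p*n₁ + r*n₃) = δ * (q*n₂) := by
      have e3 : (q:ℤ) = p + r := by exact_mod_cast hq
      linear_combination (-(δ*(r:ℤ)))*e1 + (δ*(p:ℤ))*e2 - (δ*(n₂:ℤ))*e3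
    have := mul_left_cancel₀ (show (δ:ℤ) ≠ 0 by exact_mod_cast hδ0.ne') hZ
    exact_mod_cast this
  have hgcd23 : Nat.gcd (n₂ - n₁) (n₃ - n₁) = δ := by
    have h' : n₃ - n₁ = (n₃ - n₂) + (n₂ - n₁) := by omega
    rw [h', Nat.gcd_add_self_right, ← hδ]
  have hgcd32 : Nat.gcd (n₃ - n₂) (n₃ - n₁) = δ := by
    have h' : n₃ - n₁ = (n₂ - n₁) + (n₃ - n₂) := by omega
    rw [h', Nat.gcd_add_self_right, Nat.gcd_comm, ← hδ]
  have hrdiv : r = (n₂ - n₁) / δ := by rw [hr, Nat.mul_div_cancel_left _ hδ0]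
  have hqdiv : q = (n₃ - n₁) / δ := by
    have hd : n₃ - n₁ = δ * q := by omega
    rw [hd, Nat.mul_div_cancel_left _ hδ0]
  have hpdiv : p = (n₃ - n₂) / δ := by rw [hp, Nat.mul_div_cancel_left _ hδ0]
  have co_rq : Nat.Coprime r q := by
    rw [hrdiv, hqdiv, ← hgcd23]
    exact Nat.coprime_div_gcd_div_gcd (by rw [hgcd23]; exact hδ0)
  have co_pq : Nat.Coprime p q := by
    rw [hpdiv, hqdiv, ← hgcd32]
    exact Nat.coprime_div_gcd_div_gcd (by rw [hgcd32]; exact hδ0)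
  refine ⟨(n₁+n₂+n₃)^3, ?_⟩
  obtain ⟨C, hC⟩ : ∃ C, C = (n₁+n₂+n₃)^3 := ⟨_, rfl⟩
  rw [← hC]
  intro k hk
  have hC1 : 1 ≤ C := by
    rw [hC]
    exact Nat.one_le_iff_ne_zero.mpr (pow_ne_zero _ (by omega))
  constructor
  · -- Part 1
    intro x j ℓ hax hxc hmod hxeq hl
    have hsub : n₃ - n₂ = δ * p := by omega
    rw [hsub] at hxeq hl
    have hdvdl : δ ∣ ℓ := by
      have h1 : δ ∣ x - a k := (Nat.modEq_iff_dvd' hax).mp hmod.symm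
      have h2 : x - a k = n₂*q*(δ*p)*j + ℓ := by omega
      rw [h2] at h1
      have h3 : δ ∣ n₂*q*(δ*p)*j := ⟨n₂*q*p*j, by ring⟩
      exact (Nat.dvd_add_right h3).mp h1
    obtain ⟨ℓ', hℓ'⟩ := hdvdl
    rw [hℓ'] at hxeq hl
    rw [ha] at hxeq
    have hℓ'lt : ℓ' < n₂ * q * p := by
      have h1 : δ * ℓ' < δ * (n₂ * q * p) := by
        calc δ * ℓ' < n₂*q*(δ*p) := hl
          _ = δ * (n₂*q*p) := by ring
      exact lt_of_mul_lt_mul_left h1 (Nat.zero_le δ)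
    have hck : c k = k*δ*(n₂*q)*n₁*n₂ + n₂*q*(δ*p) * (k*δ*n₁) := by
      rw [hc, ← hpn]; ring
    have hj1 : j + 1 ≤ k * δ * n₁ := by
      have h1 : n₂*q*(δ*p)*j < n₂*q*(δ*p)*(k*δ*n₁) := by omega
      exact Nat.lt_of_mul_lt_mul_left h1
    rcases lt_or_ge j C with hjC | hjC
    · have hnn : (1:ℤ) ≤ (n₂:ℤ)*(n₃:ℤ) := by
        have := Nat.mul_pos h2' h3'
        exact_mod_cast this
      have hj' : (j:ℤ) - C ≤ -1 := by
        have : (j:ℤ) < C := by exact_mod_cast hjC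
        linarith
      have hle0 : ((n₂:ℤ)*(n₃:ℤ))*((j:ℤ) - C) + 1 ≤ 0 := by
        have hm := mul_le_mul_of_nonneg_left hj' (by positivity : (0:ℤ) ≤ (n₂:ℤ)*(n₃:ℤ))
        linarith only [hm, hnn]
      calc ((n₂:ℤ)*(n₃:ℤ))*((j:ℤ) - C) + 1 ≤ 0 := hle0
        _ ≤ _ := Int.natCast_nonneg _
    · obtain ⟨j₀, rfl⟩ : ∃ j₀, j = C + j₀ := ⟨j - C, by omega⟩
      have hnp : p*n₁ ≤ q*n₂ := by omega
      have f1 : (C+j₀+1)*(n₂*n₂*q*q) ≤ (k*δ*n₁)*(n₂*n₂*q*q) := Nat.mul_le_mul_right _ hj1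
      have f2 : (j₀*(n₂*q))*(p*n₁) + (j₀*(n₂*q))*(r*n₃) = (j₀*(n₂*q))*(q*n₂) := by
        rw [← Nat.mul_add, hpq_id]
      have f3 : (C*(n₂*q))*(p*n₁) ≤ (C*(n₂*q))*(q*n₂) := Nat.mul_le_mul_left _ hnp
      have f4 : n₁*(ℓ'+1) ≤ n₁*(n₂*q*p) := Nat.mul_le_mul_left _ hℓ'lt
      have f6 : (n₂*q)*(p*n₁) + (n₂*q)*(r*n₃) = (n₂*q)*(q*n₂) := by
        rw [← Nat.mul_add, hpq_id]
      have f5 : q*r ≤ (q*r)*(n₂*n₃) := Nat.le_mul_of_pos_right _ (Nat.mul_pos h2' h3')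
      have hA : (n₂*n₃*j₀)*r*q + (n₁*n₂*p*q*(C+j₀) + n₁*ℓ') + q*r ≤ (k*δ*(n₂*q)*n₁*n₂)*q := by
        linarith only [f1, f2, f3, f4, f5, f6]
      obtain ⟨a₂, A₃, ha₂, habe⟩ := dio r q (n₁*n₂*p*q*(C+j₀) + n₁*ℓ')
        ((k*δ*(n₂*q)*n₁*n₂)*q) co_rq hq0 (by linarith only [hA, Nat.zero_le ((n₂*n₃*j₀)*r*q)])
      have hA3 : (n₂*n₃*j₀)*r ≤ A₃ := by
        have g1 : a₂*r ≤ q*r := Nat.mul_le_mul_right _ (le_of_lt ha₂)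
        have g2 : (n₂*n₃*j₀)*r*q ≤ A₃*q := by linarith only [hA, habe, g1]
        exact Nat.le_of_mul_le_mul_right g2 hq0
      have hxq : x * q = (k*δ*(n₂*q)*n₁*n₂ + n₂*q*(δ*p)*(C+j₀) + δ*ℓ') * q := by
        rw [hxeq]
      have hB : a₂ + A₃ + (n₂*n₃*j₀)*p ≤ x := by
        have f7 : a₂*p ≤ q*p := Nat.mul_le_mul_right _ (le_of_lt ha₂)
        have f8 : a₂*q = a₂*p + a₂*r := by rw [hq]; ring
        have f9 : n₁*(n₂*p*q*(C+j₀)) + (δ*q)*(n₂*p*q*(C+j₀)) = n₃*(n₂*p*q*(C+j₀)) := by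
          rw [← hqn]; ring
        have f10 : q*p ≤ (q*p)*(n₂*n₃*C) :=
          Nat.le_mul_of_pos_right _ (Nat.mul_pos (Nat.mul_pos h2' h3') (by omega))
        have key : (a₂ + A₃ + (n₂*n₃*j₀)*p)*q ≤ x*q := by
          linarith only [habe, hxq, f7, f8, f9, f10, Nat.zero_le (n₁*ℓ'), Nat.zero_le (δ*ℓ'*q),
            Nat.zero_le (n₂*n₃*j₀*p*q)]
        exact Nat.le_of_mul_le_mul_right key hq0
      have hle : a₂ + A₃ ≤ x := by omega
      have hval : (x - (a₂ + A₃))*n₁ + a₂*n₂ + A₃*n₃ = k*(δ*(n₂*q)*n₁*n₂*n₃) := by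
        have E1 : (a₂:ℤ)*r + A₃*q + ((n₁:ℤ)*n₂*p*q*(C+j₀) + n₁*ℓ') = ((k:ℤ)*δ*(n₂*q)*n₁*n₂)*q := by
          exact_mod_cast habe
        have E2 : (x:ℤ) = (k:ℤ)*δ*(n₂*q)*n₁*n₂ + (n₂:ℤ)*q*(δ*p)*(C+j₀) + (δ:ℤ)*ℓ' := by
          exact_mod_cast hxeq
        have E3 : (n₁:ℤ) + δ*r = n₂ := by exact_mod_cast hrn
        have E4 : (n₁:ℤ) + δ*q = n₃ := by exact_mod_cast hqn
        zify [hle]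
        linear_combination (n₁:ℤ)*E2 + (δ:ℤ)*E1 - (a₂:ℤ)*E3 - (A₃:ℤ)*E4
          + ((k:ℤ)*δ*(n₂*q)*n₁*n₂)*E4
      have hcount := count_lb n₁ n₂ n₃ p q r (k*(δ*(n₂*q)*n₁*n₂*n₃)) x (n₂*n₃*j₀) (x - (a₂+A₃)) a₂ A₃
        h₀ h2' h3' hp0 hq hpq_id hval (by omega) (by omega) hA3
      have hcast : ((n₂:ℤ)*(n₃:ℤ))*((↑(C+j₀):ℤ) - C) + 1 = (((n₂*n₃*j₀):ℕ):ℤ) + 1 := by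
        push_cast; ring
      rw [hcast]
      exact_mod_cast hcount
  · -- Part 2
    intro x j ℓ hcx hxb hmod hxeq hl
    have hsub : n₂ - n₁ = δ * r := by omega
    rw [hsub] at hxeq hl
    have hdvdl : δ ∣ ℓ := by
      have h1 : δ ∣ b k - x := (Nat.modEq_iff_dvd' hxb).mp hmod
      have h2 : b k - x = n₂*q*(δ*r)*j + ℓ := by omega
      rw [h2] at h1
      have h3 : δ ∣ n₂*q*(δ*r)*j := ⟨n₂*q*r*j, by ring⟩
      exact (Nat.dvd_add_right h3).mp h1
    obtain ⟨ℓ', hℓ'⟩ := hdvdl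
    rw [hℓ'] at hxeq hl
    rw [hb] at hxeq
    have hℓ'lt : ℓ' < n₂ * q * r := by
      have h1 : δ * ℓ' < δ * (n₂ * q * r) := by
        calc δ * ℓ' < n₂*q*(δ*r) := hl
          _ = δ * (n₂*q*r) := by ring
      exact lt_of_mul_lt_mul_left h1 (Nat.zero_le δ)
    have hbk : k*δ*(n₂*q)*n₂*n₃ = c k + n₂*q*(δ*r) * (k*δ*n₃) := by
      rw [hc, ← hrn]; ring
    have hj1 : j + 1 ≤ k * δ * n₃ := by
      have h1 : n₂*q*(δ*r)*j < n₂*q*(δ*r)*(k*δ*n₃) := by omega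
      exact Nat.lt_of_mul_lt_mul_left h1
    rcases lt_or_ge j C with hjC | hjC
    · have hnn : (1:ℤ) ≤ (n₁:ℤ)*(n₂:ℤ) := by
        have := Nat.mul_pos h₀ h2'
        exact_mod_cast this
      have hj' : (j:ℤ) - C ≤ -1 := by
        have : (j:ℤ) < C := by exact_mod_cast hjC
        linarith
      have hle0 : ((n₁:ℤ)*(n₂:ℤ))*((j:ℤ) - C) + 1 ≤ 0 := by
        have hm := mul_le_mul_of_nonneg_left hj' (by positivity : (0:ℤ) ≤ (n₁:ℤ)*(n₂:ℤ))
        linarith only [hm, hnn]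
      calc ((n₁:ℤ)*(n₂:ℤ))*((j:ℤ) - C) + 1 ≤ 0 := hle0
        _ ≤ _ := Int.natCast_nonneg _
    · obtain ⟨j₀, rfl⟩ : ∃ j₀, j = C + j₀ := ⟨j - C, by omega⟩
      have hnr : r*n₃ ≤ q*n₂ := by omega
      have f1 : (C+j₀+1)*(n₂*n₂*q*q) ≤ (k*δ*n₃)*(n₂*n₂*q*q) := Nat.mul_le_mul_right _ hj1
      have f2 : (j₀*(n₂*q))*(p*n₁) + (j₀*(n₂*q))*(r*n₃) = (j₀*(n₂*q))*(q*n₂) := by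
        rw [← Nat.mul_add, hpq_id]
      have f3 : (C*(n₂*q))*(p*n₁) + (C*(n₂*q))*(r*n₃) = (C*(n₂*q))*(q*n₂) := by
        rw [← Nat.mul_add, hpq_id]
      have f4 : n₃*(ℓ'+1) ≤ n₃*(n₂*q*r) := Nat.mul_le_mul_left _ hℓ'lt
      have f6 : (n₂*q)*(p*n₁) + (n₂*q)*(r*n₃) = (n₂*q)*(q*n₂) := by
        rw [← Nat.mul_add, hpq_id]
      have f10 : q*p ≤ (q*p)*(C*(n₁*n₂)) :=
        Nat.le_mul_of_pos_right _ (Nat.mul_pos (by omega) (Nat.mul_pos h₀ h2'))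
      have hA : (n₁*n₂*j₀)*p*q + (n₂*n₃*q*r*(C+j₀) + n₃*ℓ') + q*p ≤ (k*δ*(n₂*q)*n₂*n₃)*q := by
        linarith only [f1, f2, f3, f4, f6, f10, Nat.zero_le (n₂*q*(p*n₁)), Nat.zero_le (n₃*ℓ'),
          Nat.zero_le ((n₂*q)*(r*n₃))]
      obtain ⟨a₂, A₁, ha₂, habe⟩ := dio p q (n₂*n₃*q*r*(C+j₀) + n₃*ℓ')
        ((k*δ*(n₂*q)*n₂*n₃)*q) co_pq hq0 (by linarith only [hA, Nat.zero_le ((n₁*n₂*j₀)*p*q)])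
      have hA1 : (n₁*n₂*j₀)*p ≤ A₁ := by
        have g1 : a₂*p ≤ q*p := Nat.mul_le_mul_right _ (le_of_lt ha₂)
        have g2 : (n₁*n₂*j₀)*p*q ≤ A₁*q := by linarith only [hA, habe, g1]
        exact Nat.le_of_mul_le_mul_right g2 hq0
      have hxq : x * q + (n₂*q*(δ*r)*(C+j₀))*q + (δ*ℓ')*q = (k*δ*(n₂*q)*n₂*n₃)*q := by
        calc x * q + (n₂*q*(δ*r)*(C+j₀))*q + (δ*ℓ')*q
            = (x + n₂*q*(δ*r)*(C+j₀) + δ*ℓ') * q := by ring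
          _ = (k*δ*(n₂*q)*n₂*n₃)*q := by rw [hxeq]
      have hB : a₂ + A₁ + (n₁*n₂*j₀)*r ≤ x := by
        have f7 : a₂*r ≤ q*r := Nat.mul_le_mul_right _ (le_of_lt ha₂)
        have f8 : a₂*q = a₂*p + a₂*r := by rw [hq]; ring
        have f9 : n₁*(n₂*q*r*(C+j₀)) + (δ*q)*(n₂*q*r*(C+j₀)) = n₃*(n₂*q*r*(C+j₀)) := by
          rw [← hqn]; ring
        have f9' : n₁*ℓ' + (δ*q)*ℓ' = n₃*ℓ' := by rw [← hqn]; ring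
        have f11 : q*r ≤ (q*r)*(n₁*n₂*C) :=
          Nat.le_mul_of_pos_right _ (Nat.mul_pos (Nat.mul_pos h₀ h2') (by omega))
        have key : (a₂ + A₁ + (n₁*n₂*j₀)*r)*q ≤ x*q := by
          linarith only [habe, hxq, f7, f8, f9, f9', f11, Nat.zero_le (n₁*ℓ'),
            Nat.zero_le (n₁*(n₂*q*r*j₀)), Nat.zero_le (n₁*n₂*j₀*r*q)]
        exact Nat.le_of_mul_le_mul_right key hq0
      have hle : a₂ + A₁ ≤ x := by omega
      have hval : A₁*n₁ + a₂*n₂ + (x - (a₂ + A₁))*n₃ = k*(δ*(n₂*q)*n₁*n₂*n₃) := by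
        have E1 : (a₂:ℤ)*p + A₁*q + ((n₂:ℤ)*n₃*q*r*(C+j₀) + n₃*ℓ') = ((k:ℤ)*δ*(n₂*q)*n₂*n₃)*q := by
          exact_mod_cast habe
        have E2 : (x:ℤ) + (n₂:ℤ)*q*(δ*r)*(C+j₀) + (δ:ℤ)*ℓ' = (k:ℤ)*δ*(n₂*q)*n₂*n₃ := by
          exact_mod_cast hxeq
        have E3 : (n₂:ℤ) + δ*p = n₃ := by exact_mod_cast hpn
        have E4 : (n₁:ℤ) + δ*q = n₃ := by exact_mod_cast hqn
        zify [hle]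
        linear_combination (n₃:ℤ)*E2 - (δ:ℤ)*E1 + (a₂:ℤ)*E3 + (A₁:ℤ)*E4
          - ((k:ℤ)*δ*(n₂*q)*n₂*n₃)*E4
      have hcount := count_lb n₁ n₂ n₃ p q r (k*(δ*(n₂*q)*n₁*n₂*n₃)) x (n₁*n₂*j₀) A₁ a₂ (x - (a₂+A₁))
        h₀ h2' h3' hp0 hq hpq_id hval (by omega) hA1 (by omega)
      have hcast : ((n₁:ℤ)*(n₂:ℤ))*((↑(C+j₀):ℤ) - C) + 1 = ((n₁*n₂*j₀):ℤ) + 1 := by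
        push_cast; ring
      rw [hcast]
      exact_mod_cast hcount
end

section
/- Let s = δ·t·n₁n₂n₃ and, for k ≥ 1, set a_k = ks/n₃, c_k = ks/n₂, b_k = ks/n₁, and define L_k(x) = (n₂n₃/(t(n₃−n₂)))(x − a_k) + 1 for a_k ≤ x ≤ c_k and L_k(x) = (n₁n₂/(t(n₂−n₁)))(b_k − x) + 1 for c_k ≤ x ≤ b_k (the two formulas agree at x = c_k, where both equal ks/t + 1). There exists a constant C (independent of k) such that for all k ≥ 1 and all integers x with a_k ≤ x ≤ b_k and x ≡ a_k (mod δ), the number f_{ks}(x) of factorizations of ks of length x satisfies 0 ≤ L_k(x) − f_{ks}(x) ≤ C. -/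
def Tset (e₂ e₃ m lo : ℕ) : Finset ℕ :=
  (Finset.range (m+1)).filter (fun j => lo ≤ j ∧ j ≤ m / e₃ ∧ e₃ * j % e₂ = m % e₂)

lemma natdiv_le_real (a b : ℕ) (hb : 0 < b) : ((a / b : ℕ) : ℝ) ≤ (a : ℝ) / b := by
  rw [le_div_iff₀ (by exact_mod_cast hb : (0:ℝ) < b)]
  exact_mod_cast Nat.div_mul_le_self a b

lemma real_le_natdiv (a b : ℕ) (hb : 0 < b) : (a : ℝ) / b ≤ ((a / b : ℕ) : ℝ) + 1 := by
  rw [div_le_iff₀ (by exact_mod_cast hb : (0:ℝ) < b)]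
  have h := Nat.lt_div_mul_add (a := a) (b := b) hb
  have h2 : (a:ℝ) < ((a/b : ℕ) : ℝ) * b + b := by exact_mod_cast h
  nlinarith [h2]

lemma fmul_eq_card_Tset (n₁ n₂ n₃ δ e₂ e₃ N x m lo : ℕ)
    (h₀ : 0 < n₁) (hδ : 0 < δ) (he₂ : 0 < e₂) (he : e₂ < e₃)
    (hn₂ : n₂ = n₁ + δ * e₂) (hn₃ : n₃ = n₁ + δ * e₃)
    (hm : δ * m + x * n₁ = N) (hxN : x ≤ N)
    (hlo : ∀ j : ℕ, lo ≤ j ↔ m - e₂ * x ≤ (e₃ - e₂) * j) :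
    fmul n₁ n₂ n₃ N x = (Tset e₂ e₃ m lo).card := by
  subst hn₂ hn₃
  have he₃ : 0 < e₃ := by omega
  obtain ⟨D, hD⟩ : ∃ D, e₃ = e₂ + D := ⟨e₃ - e₂, by omega⟩
  have hloD : ∀ j : ℕ, lo ≤ j ↔ m - e₂ * x ≤ D * j := by
    intro j
    rw [hlo j, show e₃ - e₂ = D by omega]
  have hmN : m ≤ N := by
    have : m ≤ δ * m := Nat.le_mul_of_pos_left m hδ
    omega
  rw [fmul, Zf, Finset.filter_filter, Tset]
  apply Finset.card_bij (fun a _ => a.2.2)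
  · -- maps into Tset
    rintro ⟨a1, a2, a3⟩ ha
    rw [Finset.mem_filter] at ha
    simp only [Finset.mem_filter, Finset.mem_product, Finset.mem_range, len] at ha ⊢
    obtain ⟨⟨hr1, hr2, hr3⟩, heq, hlen⟩ := ha
    have key : δ * (e₂ * a2) + δ * (e₃ * a3) + x * n₁ = N := by rw [← hlen, ← heq]; ring
    have hS : e₂ * a2 + e₃ * a3 = m := by
      have h' : δ * (e₂ * a2 + e₃ * a3) = δ * m := by rw [Nat.mul_add]; omega
      exact Nat.eq_of_mul_eq_mul_left hδ h'
    have hsplit : e₃ * a3 = e₂ * a3 + D * a3 := by rw [hD]; ring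
    have hE3 : e₃ * a3 ≤ m := by omega
    have ha3m : a3 ≤ m := le_trans (Nat.le_mul_of_pos_left a3 he₃) hE3
    have h2 : e₂ * a2 + e₂ * a3 ≤ e₂ * x := by
      have := Nat.mul_le_mul_left e₂ (show a2 + a3 ≤ x by omega)
      rwa [Nat.mul_add] at this
    refine ⟨by omega, ?_, ?_, ?_⟩
    · rw [hloD]; omega
    · rw [Nat.le_div_iff_mul_le he₃, mul_comm]; omega
    · rw [← hS, Nat.mul_add_mod]
  · -- injective
    rintro ⟨a1, a2, a3⟩ ha ⟨b1, b2, b3⟩ hb hab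
    rw [Finset.mem_filter] at ha
    rw [Finset.mem_filter] at hb
    simp only [Finset.mem_filter, Finset.mem_product, Finset.mem_range, len] at ha hb
    obtain ⟨-, heqa, hlena⟩ := ha
    obtain ⟨-, heqb, hlenb⟩ := hb
    simp only at hab
    subst hab
    have keya : δ * (e₂ * a2) + δ * (e₃ * a3) + x * n₁ = N := by rw [← hlena, ← heqa]; ring
    have keyb : δ * (e₂ * b2) + δ * (e₃ * a3) + x * n₁ = N := by rw [← hlenb, ← heqb]; ring
    have h2 : δ * (e₂ * a2) = δ * (e₂ * b2) := by omega
    have ha2b2 : a2 = b2 :=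
      Nat.eq_of_mul_eq_mul_left he₂ (Nat.eq_of_mul_eq_mul_left hδ h2)
    have : a1 = b1 := by omega
    simp [this, ha2b2]
  · -- surjective
    intro j hj
    simp only [Tset, Finset.mem_filter, Finset.mem_range] at hj
    obtain ⟨hjm, hjlo, hjhi, hjR⟩ := hj
    have hE3 : e₃ * j ≤ m := by
      have h := (Nat.le_div_iff_mul_le he₃).mp hjhi
      rwa [mul_comm] at h
    have hdvd : e₂ ∣ m - e₃ * j := (Nat.modEq_iff_dvd' hE3).mp hjR
    obtain ⟨a2, ha2⟩ : ∃ a2, e₂ * a2 = m - e₃ * j := ⟨_, Nat.mul_div_cancel' hdvd⟩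
    have hsplit : e₃ * j = e₂ * j + D * j := by rw [hD]; ring
    have hS : e₂ * a2 + e₃ * j = m := by omega
    have hsum : a2 + j ≤ x := by
      have h1 : m - e₂ * x ≤ D * j := (hloD j).mp hjlo
      have h4 : e₂ * a2 + e₂ * j ≤ e₂ * x := by omega
      have h5 : e₂ * (a2 + j) ≤ e₂ * x := by rwa [Nat.mul_add]
      exact Nat.le_of_mul_le_mul_left h5 he₂
    have ha2N : a2 ≤ N := by
      have : a2 ≤ e₂ * a2 := Nat.le_mul_of_pos_left a2 he₂
      omega
    refine ⟨⟨x - (a2 + j), a2, j⟩, ?_, rfl⟩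
    rw [Finset.mem_filter]
    simp only [Finset.mem_filter, Finset.mem_product, Finset.mem_range, len]
    refine ⟨⟨by omega, by omega, by omega⟩, ?_, by omega⟩
    have hexp : (x - (a2 + j)) * n₁ + a2 * (n₁ + δ * e₂) + j * (n₁ + δ * e₃)
        = ((x - (a2 + j)) + (a2 + j)) * n₁ + δ * (e₂ * a2 + e₃ * j) := by ring
    rw [hexp, Nat.sub_add_cancel hsum, hS]
    omega


lemma Tset_step (e₂ e₃ lo : ℕ) (he₂ : 0 < e₂) (hcop : Nat.Coprime e₂ e₃)
    (j j' : ℕ) (h1 : lo ≤ j) (hle : j ≤ j')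
    (hR : e₃ * j % e₂ = e₃ * j' % e₂) (hEq : (j - lo) / e₂ = (j' - lo) / e₂) :
    j = j' := by
  have hmle : e₃ * j ≤ e₃ * j' := Nat.mul_le_mul_left e₃ hle
  have hm1 : e₂ ∣ e₃ * j' - e₃ * j := (Nat.modEq_iff_dvd' hmle).mp hR
  have hm2 : e₂ ∣ (j' - j) * e₃ := by
    rw [Nat.sub_mul, mul_comm j' e₃, mul_comm j e₃]; exact hm1
  have hdvd : e₂ ∣ j' - j := hcop.dvd_of_dvd_mul_right hm2
  obtain ⟨q, hq⟩ := hdvd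
  have hsplit : j' - lo = (j - lo) + e₂ * q := by omega
  have h2 : (j' - lo) / e₂ = (j - lo) / e₂ + q := by
    rw [hsplit, Nat.add_mul_div_left _ _ he₂]
  rw [← hEq] at h2
  have hq0 : q = 0 := Nat.left_eq_add.mp h2
  rw [hq0, Nat.mul_zero] at hq
  omega

lemma card_Tset_le (e₂ e₃ m lo : ℕ) (he₂ : 0 < e₂) (hcop : Nat.Coprime e₂ e₃) :
    (Tset e₂ e₃ m lo).card ≤ (m / e₃ - lo) / e₂ + 1 := by
  have h := Finset.card_le_card_of_injOn (f := fun j => (j - lo) / e₂)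
    (s := Tset e₂ e₃ m lo) (t := Finset.range ((m / e₃ - lo) / e₂ + 1)) ?_ ?_
  · simpa using h
  · intro j hj
    simp only [Finset.mem_coe, Tset, Finset.mem_filter, Finset.mem_range] at hj ⊢
    have h1 : (j - lo) / e₂ ≤ (m / e₃ - lo) / e₂ :=
      Nat.div_le_div_right (Nat.sub_le_sub_right hj.2.2.1 lo)
    exact Nat.lt_succ_of_le h1
  · intro j hj j' hj' hEq
    simp only [Tset, Finset.coe_filter, Finset.mem_range, Set.mem_setOf_eq] at hj hj'
    simp only at hEq
    rcases le_total j j' with hle | hle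
    · exact Tset_step e₂ e₃ lo he₂ hcop j j' hj.2.1 hle (hj.2.2.2.trans hj'.2.2.2.symm) hEq
    · exact (Tset_step e₂ e₃ lo he₂ hcop j' j hj'.2.1 hle
        (hj'.2.2.2.trans hj.2.2.2.symm) hEq.symm).symm

lemma le_card_Tset (e₂ e₃ m lo : ℕ) (he₂ : 0 < e₂) (he₃ : 0 < e₃)
    (hcop : Nat.Coprime e₂ e₃) :
    (m / e₃ + 1 - lo) / e₂ ≤ (Tset e₂ e₃ m lo).card := by
  suffices H : ∀ hi Q : ℕ, hi = m / e₃ → Q = (hi + 1 - lo) / e₂ →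
      Q ≤ (Tset e₂ e₃ m lo).card from H _ _ rfl rfl
  intro hi Q hhi hQ
  have hhim : hi ≤ m := by rw [hhi]; exact Nat.div_le_self m e₃
  have hQle : e₂ * Q ≤ hi + 1 - lo := by rw [hQ, mul_comm]; exact Nat.div_mul_le_self _ _
  rcases Nat.eq_zero_or_pos Q with hQ0 | hQpos
  · omega
  obtain ⟨u, hu⟩ : ∃ u, e₃ * u ≡ 1 [MOD e₂] := by
    rcases Nat.lt_or_ge e₂ 2 with h2 | h2
    · have he1 : e₂ = 1 := by omega
      exact ⟨0, by simp [he1, Nat.ModEq]⟩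
    · obtain ⟨u, -, hu⟩ := Nat.exists_mul_mod_eq_one_of_coprime hcop.symm h2
      refine ⟨u, ?_⟩
      show e₃ * u % e₂ = 1 % e₂
      rw [Nat.mod_eq_of_lt h2]; exact hu
  have hre : e₃ * (u * m) ≡ m [MOD e₂] := by
    have h1 : e₃ * (u * m) = e₃ * u * m := by ring
    rw [h1]
    simpa using hu.mul_right m
  set r := u * m with hrdef
  have hlolo : lo ≤ e₂ * lo := Nat.le_mul_of_pos_left lo he₂
  obtain ⟨w, hw⟩ : ∃ w, w = (r + e₂ * lo - lo) % e₂ := ⟨_, rfl⟩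
  have hwlt : w < e₂ := hw ▸ Nat.mod_lt _ he₂
  have hj₀r : (lo + w) ≡ r [MOD e₂] := by
    have heq : lo + (r + e₂ * lo - lo) = r + e₂ * lo := by omega
    calc lo + w ≡ lo + (r + e₂ * lo - lo) [MOD e₂] := by
          rw [hw]; exact Nat.ModEq.add_left lo (Nat.mod_modEq _ _)
      _ = r + e₂ * lo := heq
      _ ≡ r [MOD e₂] := by
          show (r + e₂ * lo) % e₂ = r % e₂
          exact Nat.add_mul_mod_self_left r e₂ lo
  have h := Finset.card_le_card_of_injOn (f := fun i => (lo + w) + e₂ * i)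
    (s := Finset.range Q) (t := Tset e₂ e₃ m lo) ?_ ?_
  · simpa using h
  · intro i hi'
    simp only [Finset.mem_coe, Finset.mem_range] at hi'
    have hiQ : e₂ * i + e₂ ≤ e₂ * Q := by
      have := Nat.mul_le_mul_left e₂ (show i + 1 ≤ Q by omega)
      rwa [Nat.mul_add, Nat.mul_one] at this
    have hjile : (lo + w) + e₂ * i ≤ hi := by omega
    simp only [Finset.mem_coe, Tset, Finset.mem_filter, Finset.mem_range]
    refine ⟨by omega, by omega, by rw [← hhi]; exact hjile, ?_⟩
    have h1 : (lo + w) + e₂ * i ≡ r [MOD e₂] := by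
      calc (lo + w) + e₂ * i ≡ lo + w [MOD e₂] := by
            show ((lo + w) + e₂ * i) % e₂ = (lo + w) % e₂
            exact Nat.add_mul_mod_self_left (lo + w) e₂ i
        _ ≡ r [MOD e₂] := hj₀r
    exact (Nat.ModEq.mul_left e₃ h1).trans hre
  · intro i hi1 i' hi2 hEq
    simp only at hEq
    have h2 : e₂ * i = e₂ * i' := by omega
    exact Nat.eq_of_mul_eq_mul_left he₂ h2



set_option maxHeartbeats 2000000 in
/-- The piecewise linear function L_k dominates the multiplicity function of ks on
[aₖ, bₖ] (on lengths congruent to aₖ mod δ), and the difference is bounded by a constant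
independent of k. -/
theorem multiplicity_close_to_piecewise_linear (n₁ n₂ n₃ : ℕ) (h₀ : 0 < n₁) (h₁ : n₁ < n₂) (h₂ : n₂ < n₃)
    (hg : Nat.gcd n₁ (Nat.gcd n₂ n₃) = 1)
    (δ t : ℕ) (hδ : δ = Nat.gcd (n₂ - n₁) (n₃ - n₂)) (ht : t = n₂ * (n₃ - n₁) / δ)
    (s : ℕ) (hs : s = δ * t * n₁ * n₂ * n₃)
    (a c b : ℕ → ℕ) (ha : ∀ k, a k = k * δ * t * n₁ * n₂)
    (hc : ∀ k, c k = k * δ * t * n₁ * n₃) (hb : ∀ k, b k = k * δ * t * n₂ * n₃) :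
    ∃ C : ℝ, ∀ k : ℕ, 1 ≤ k → ∀ x : ℕ, a k ≤ x → x ≤ b k → x ≡ a k [MOD δ] →
      0 ≤ (if x ≤ c k then
              ((n₂ : ℝ) * (n₃ : ℝ)) / ((t : ℝ) * ((n₃ : ℝ) - (n₂ : ℝ))) * ((x : ℝ) - (a k : ℝ)) + 1
            else
              ((n₁ : ℝ) * (n₂ : ℝ)) / ((t : ℝ) * ((n₂ : ℝ) - (n₁ : ℝ))) * ((b k : ℝ) - (x : ℝ)) + 1)
            - (fmul n₁ n₂ n₃ (k * s) x : ℝ) ∧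
      (if x ≤ c k then
          ((n₂ : ℝ) * (n₃ : ℝ)) / ((t : ℝ) * ((n₃ : ℝ) - (n₂ : ℝ))) * ((x : ℝ) - (a k : ℝ)) + 1
        else
          ((n₁ : ℝ) * (n₂ : ℝ)) / ((t : ℝ) * ((n₂ : ℝ) - (n₁ : ℝ))) * ((b k : ℝ) - (x : ℝ)) + 1)
        - (fmul n₁ n₂ n₃ (k * s) x : ℝ) ≤ C := by
  refine ⟨3, ?_⟩
  intro k hk x hax hxb hmod
  have hd₂pos : 0 < n₂ - n₁ := by omega
  have hδpos : 0 < δ := by rw [hδ]; exact Nat.gcd_pos_of_pos_left _ hd₂pos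
  have hδd₂ : δ ∣ n₂ - n₁ := hδ ▸ Nat.gcd_dvd_left _ _
  have hδd₃' : δ ∣ n₃ - n₂ := hδ ▸ Nat.gcd_dvd_right _ _
  have hδd₃ : δ ∣ n₃ - n₁ := by
    have hsum : n₃ - n₁ = (n₂ - n₁) + (n₃ - n₂) := by omega
    rw [hsum]; exact Nat.dvd_add hδd₂ hδd₃'
  obtain ⟨e₂, he₂def⟩ := hδd₂
  obtain ⟨e₃, he₃def⟩ := hδd₃
  have hn₂ : n₂ = n₁ + δ * e₂ := by omega
  have hn₃ : n₃ = n₁ + δ * e₃ := by omega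
  have he₂ : 0 < e₂ := by
    rcases Nat.eq_zero_or_pos e₂ with h | h
    · rw [h, Nat.mul_zero] at he₂def; omega
    · exact h
  have he : e₂ < e₃ := by
    have h23 : δ * e₂ < δ * e₃ := by omega
    exact lt_of_mul_lt_mul_left h23 (Nat.zero_le δ)
  have he₃ : 0 < e₃ := by omega
  have hgcd : Nat.gcd (n₂ - n₁) (n₃ - n₁) = δ := by
    apply Nat.dvd_antisymm
    · rw [hδ]
      refine Nat.dvd_gcd (Nat.gcd_dvd_left _ _) ?_
      have h1 : (n₃ - n₂) = (n₃ - n₁) - (n₂ - n₁) := by omega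
      rw [h1]
      exact Nat.dvd_sub (Nat.gcd_dvd_right _ _) (Nat.gcd_dvd_left _ _)
    · exact Nat.dvd_gcd ⟨e₂, he₂def⟩ ⟨e₃, he₃def⟩
  have hcop : Nat.Coprime e₂ e₃ := by
    have hco := Nat.coprime_div_gcd_div_gcd (m := n₂ - n₁) (n := n₃ - n₁)
      (by rw [hgcd]; exact hδpos)
    rw [hgcd] at hco
    have hA : (n₂ - n₁) / δ = e₂ := by rw [he₂def]; exact Nat.mul_div_cancel_left _ hδpos
    have hB : (n₃ - n₁) / δ = e₃ := by rw [he₃def]; exact Nat.mul_div_cancel_left _ hδpos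
    rwa [hA, hB] at hco
  have hte : t = n₂ * e₃ := by
    rw [ht, he₃def, Nat.mul_div_assoc n₂ ⟨e₃, rfl⟩, Nat.mul_div_cancel_left _ hδpos]
  set N := k * s with hN
  have hNa : N = a k * n₃ := by rw [hN, hs, ha]; ring
  have hNc : N = c k * n₂ := by rw [hN, hs, hc]; ring
  have hNb : N = b k * n₁ := by rw [hN, hs, hb]; ring
  have hxn₁N : x * n₁ ≤ N := by
    calc x * n₁ ≤ b k * n₁ := Nat.mul_le_mul_right _ hxb
      _ = N := hNb.symm
  have hxN : x ≤ N := le_trans (Nat.le_mul_of_pos_right x h₀) hxn₁N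
  -- δ ∣ N - x * n₁, via ℤ
  have hzd : (δ:ℤ) ∣ ((N:ℤ) - (x:ℤ) * (n₁:ℤ)) := by
    have h1 : (δ:ℤ) ∣ (a k : ℤ) - (x:ℤ) := hmod.dvd
    have h2 : ((N:ℤ) - (x:ℤ) * (n₁:ℤ))
        = (a k : ℤ) * ((δ:ℤ) * (e₃:ℤ)) + ((a k : ℤ) - (x:ℤ)) * (n₁:ℤ) := by
      rw [show ((N:ℤ)) = (a k : ℤ) * (n₃:ℤ) from by exact_mod_cast hNa,
        show ((n₃:ℤ)) = (n₁:ℤ) + (δ:ℤ) * (e₃:ℤ) from by exact_mod_cast hn₃]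
      ring
    rw [h2]
    exact dvd_add ((dvd_mul_right (δ:ℤ) (e₃:ℤ)).mul_left _) (h1.mul_right _)
  have hdvdm : δ ∣ N - x * n₁ := by
    have hcast : ((N - x * n₁ : ℕ) : ℤ) = (N:ℤ) - (x:ℤ) * (n₁:ℤ) := by
      push_cast [Nat.cast_sub hxn₁N]; ring
    rw [← hcast] at hzd
    exact_mod_cast hzd
  obtain ⟨m, hmdef⟩ := hdvdm
  have hm : δ * m + x * n₁ = N := by omega
  -- D, A, lo
  obtain ⟨D, hD, hDpos⟩ : ∃ D, e₃ = e₂ + D ∧ 0 < D := ⟨e₃ - e₂, by omega, by omega⟩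
  obtain ⟨A, hAdef⟩ : ∃ A, A = m - e₂ * x := ⟨_, rfl⟩
  obtain ⟨lo, hlodef⟩ : ∃ lo, lo = (A + D - 1) / D := ⟨_, rfl⟩
  have hloiff : ∀ j : ℕ, lo ≤ j ↔ A ≤ D * j := by
    intro j
    constructor
    · intro hj
      have h1 : A + D - 1 < lo * D + D := by
        rw [hlodef]; exact Nat.lt_div_mul_add hDpos
      have h2 : lo * D ≤ j * D := Nat.mul_le_mul_right _ hj
      have h3 : D * j = j * D := Nat.mul_comm _ _
      clear hlodef
      omega
    · intro hj
      rw [hlodef]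
      have h1 : (A + D - 1) / D ≤ (D * j + (D - 1)) / D :=
        Nat.div_le_div_right (by omega)
      rwa [Nat.mul_add_div hDpos, Nat.div_eq_of_lt (show D - 1 < D by omega), Nat.add_zero] at h1
  have hloT : ∀ j : ℕ, lo ≤ j ↔ m - e₂ * x ≤ (e₃ - e₂) * j := by
    intro j
    rw [hloiff j, show e₃ - e₂ = D by omega, hAdef]
  -- hi facts
  have hhi1 : (m / e₃) * e₃ ≤ m := Nat.div_mul_le_self m e₃
  have hhi2 : m < (m / e₃) * e₃ + e₃ := Nat.lt_div_mul_add he₃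
  have hlo1 : A ≤ D * lo := (hloiff lo).mp le_rfl
  have hlo2 : lo * D ≤ A + D - 1 := by
    rw [hlodef]; exact Nat.div_mul_le_self _ _
  -- m ≤ e₃ * x
  have hme₃x : m ≤ e₃ * x := by
    have h1 : a k * n₃ ≤ x * n₃ := Nat.mul_le_mul_right _ hax
    have hx3 : x * n₃ = x * n₁ + δ * (e₃ * x) := by rw [hn₃]; ring
    have h2 : δ * m ≤ δ * (e₃ * x) := by omega
    exact Nat.le_of_mul_le_mul_left h2 hδpos
  -- real positivity facts
  have hδR : (0:ℝ) < δ := by exact_mod_cast hδpos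
  have he₂R : (0:ℝ) < e₂ := by exact_mod_cast he₂
  have he₃R : (0:ℝ) < e₃ := by exact_mod_cast he₃
  have hDR : (0:ℝ) < D := by exact_mod_cast hDpos
  have hn₁R : (0:ℝ) < n₁ := by exact_mod_cast h₀
  have hmR : (δ:ℝ) * m + x * n₁ = N := by exact_mod_cast hm
  have hmval : (m:ℝ) = ((N:ℝ) - x * n₁) / δ := by
    rw [eq_div_iff (ne_of_gt hδR)]; linarith
  have hn₂R : (n₂:ℝ) = n₁ + δ * e₂ := by exact_mod_cast hn₂
  have hn₃R : (n₃:ℝ) = n₁ + δ * e₃ := by exact_mod_cast hn₃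
  have he₃DR : (e₃:ℝ) = e₂ + D := by exact_mod_cast hD
  have hteR : (t:ℝ) = n₂ * e₃ := by exact_mod_cast hte
  have hNaR : (N:ℝ) = a k * n₃ := by exact_mod_cast hNa
  have hNbR : (N:ℝ) = b k * n₁ := by exact_mod_cast hNb
  have hδne : (δ:ℝ) ≠ 0 := ne_of_gt hδR
  have he₂ne : (e₂:ℝ) ≠ 0 := ne_of_gt he₂R
  have hDne : (D:ℝ) ≠ 0 := ne_of_gt hDR
  have h5 : (0:ℝ) < (n₁:ℝ) + δ * e₂ := by
    have h6 : (0:ℝ) ≤ (δ:ℝ) * e₂ := by positivity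
    linarith
  have h5ne : ((n₁:ℝ) + δ * e₂) ≠ 0 := ne_of_gt h5
  have he₂Dne : ((e₂:ℝ) + D) ≠ 0 := by positivity
  have hn₂pos : (0:ℝ) < n₂ := by rw [hn₂R]; positivity
  have hn₂ne : (n₂:ℝ) ≠ 0 := ne_of_gt hn₂pos
  have hsub32 : (n₃:ℝ) - n₂ = (δ:ℝ) * D := by rw [hn₂R, hn₃R, he₃DR]; ring
  have hsub21 : (n₂:ℝ) - n₁ = (δ:ℝ) * e₂ := by rw [hn₂R]; ring
  -- the key identity
  have hiteq : (if x ≤ c k then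
          ((n₂ : ℝ) * (n₃ : ℝ)) / ((t : ℝ) * ((n₃ : ℝ) - (n₂ : ℝ))) * ((x : ℝ) - (a k : ℝ)) + 1
        else
          ((n₁ : ℝ) * (n₂ : ℝ)) / ((t : ℝ) * ((n₂ : ℝ) - (n₁ : ℝ))) * ((b k : ℝ) - (x : ℝ)) + 1)
      = ((m:ℝ)/(e₃:ℝ) - (A:ℝ)/(D:ℝ))/(e₂:ℝ) + 1 := by
    by_cases hxc : x ≤ c k
    · rw [if_pos hxc]
      have hex : e₂ * x ≤ m := by
        have hh1 : x * n₂ ≤ c k * n₂ := Nat.mul_le_mul_right _ hxc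
        have hh2 : x * n₂ = x * n₁ + δ * (e₂ * x) := by rw [hn₂]; ring
        have hh3 : δ * (e₂ * x) ≤ δ * m := by omega
        exact Nat.le_of_mul_le_mul_left hh3 hδpos
      have hAR : (A:ℝ) = (m:ℝ) - e₂ * x := by
        rw [hAdef]; push_cast [Nat.cast_sub hex]; ring
      rw [hAR, hmval, hNaR, hteR, hsub32, hn₃R, he₃DR]
      field_simp
      ring
    · rw [if_neg hxc]
      have hex : m ≤ e₂ * x := by
        have hcx : c k + 1 ≤ x := by omega
        have hh1 : (c k + 1) * n₂ ≤ x * n₂ := Nat.mul_le_mul_right _ hcx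
        have hh2 : x * n₂ = x * n₁ + δ * (e₂ * x) := by rw [hn₂]; ring
        have hh3 : (c k + 1) * n₂ = c k * n₂ + n₂ := by ring
        have hh4 : δ * m ≤ δ * (e₂ * x) := by omega
        exact Nat.le_of_mul_le_mul_left hh4 hδpos
      have hA0 : A = 0 := by omega
      rw [hA0, hmval, hNbR, hteR, hsub21, he₃DR]
      push_cast
      field_simp
      ring
  -- real versions of floor/ceil bounds
  have RhiU : ((m / e₃ : ℕ):ℝ) ≤ (m:ℝ)/e₃ := natdiv_le_real m e₃ he₃
  have RhiL : (m:ℝ)/e₃ ≤ ((m / e₃ : ℕ):ℝ) + 1 := real_le_natdiv m e₃ he₃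
  have RloL : (A:ℝ)/D ≤ (lo:ℝ) := by
    rw [div_le_iff₀ hDR]
    have hh := hlo1
    rw [Nat.mul_comm] at hh
    exact_mod_cast hh
  have RloU : (lo:ℝ) ≤ (A:ℝ)/D + 1 := by
    have hh1 : lo * D ≤ A + D := by omega
    have hh2 : (lo:ℝ) * D ≤ (A:ℝ) + D := by exact_mod_cast hh1
    rw [show (A:ℝ)/D + 1 = ((A:ℝ) + D)/D by field_simp]
    rw [le_div_iff₀ hDR]
    exact hh2
  have hGnn : 0 ≤ (m:ℝ)/e₃ - (A:ℝ)/D := by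
    rcases le_total (e₂ * x) m with hcase | hcase
    · have hAR : (A:ℝ) = (m:ℝ) - e₂ * x := by
        rw [hAdef]; push_cast [Nat.cast_sub hcase]; ring
      have hmx : (m:ℝ) ≤ e₃ * x := by exact_mod_cast hme₃x
      rw [hAR, sub_nonneg, div_le_div_iff₀ hDR he₃R]
      rw [he₃DR] at hmx ⊢
      nlinarith [mul_nonneg (le_of_lt he₂R) (sub_nonneg.mpr hmx)]
    · have hA0 : A = 0 := by omega
      rw [hA0]
      push_cast
      rw [zero_div, sub_zero]
      positivity
  -- counting
  have hcard := fmul_eq_card_Tset n₁ n₂ n₃ δ e₂ e₃ N x m lo h₀ hδpos he₂ he hn₂ hn₃ hm hxN hloT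
  have hup := card_Tset_le e₂ e₃ m lo he₂ hcop
  have hlow := le_card_Tset e₂ e₃ m lo he₂ he₃ hcop
  set cT := (Tset e₂ e₃ m lo).card with hcT
  have hupR : (cT:ℝ) ≤ ((m:ℝ)/e₃ - (A:ℝ)/D)/e₂ + 1 := by
    have hh1 : (cT:ℝ) ≤ (((m / e₃ - lo)/e₂ : ℕ):ℝ) + 1 := by exact_mod_cast hup
    have hh2 : (((m / e₃ - lo)/e₂ : ℕ):ℝ) ≤ ((m / e₃ - lo : ℕ):ℝ)/e₂ := natdiv_le_real _ _ he₂
    have hh3 : ((m / e₃ - lo : ℕ):ℝ) ≤ (m:ℝ)/e₃ - (A:ℝ)/D := by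
      rcases le_total lo (m / e₃) with hcase | hcase
      · rw [Nat.cast_sub hcase]
        push_cast
        linarith
      · rw [Nat.sub_eq_zero_of_le hcase]
        simpa using hGnn
    have hh4 : ((m / e₃ - lo : ℕ):ℝ)/e₂ ≤ ((m:ℝ)/e₃ - (A:ℝ)/D)/e₂ :=
      (div_le_div_iff_of_pos_right he₂R).mpr hh3
    linarith
  have hlowR : ((m:ℝ)/e₃ - (A:ℝ)/D)/e₂ + 1 ≤ (cT:ℝ) + 3 := by
    have hQ1 : (((m / e₃ + 1 - lo)/e₂ : ℕ):ℝ) ≤ (cT:ℝ) := by exact_mod_cast hlow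
    have hQ2 : ((m / e₃ + 1 - lo : ℕ):ℝ)/e₂ ≤ (((m / e₃ + 1 - lo)/e₂ : ℕ):ℝ) + 1 :=
      real_le_natdiv _ _ he₂
    have hG_le : (m:ℝ)/e₃ - (A:ℝ)/D ≤ ((m / e₃ + 1 - lo : ℕ):ℝ) + 1 := by
      rcases le_total lo (m / e₃ + 1) with hcase | hcase
      · rw [Nat.cast_sub hcase]
        push_cast
        linarith
      · rw [Nat.sub_eq_zero_of_le hcase]
        have hlc : ((m / e₃ : ℕ):ℝ) + 1 ≤ (lo:ℝ) := by exact_mod_cast hcase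
        push_cast
        linarith
    have hdiv : ((m:ℝ)/e₃ - (A:ℝ)/D)/e₂ ≤ (((m / e₃ + 1 - lo : ℕ):ℝ) + 1)/e₂ :=
      (div_le_div_iff_of_pos_right he₂R).mpr hG_le
    have hsplit2 : (((m / e₃ + 1 - lo : ℕ):ℝ) + 1)/e₂
        = ((m / e₃ + 1 - lo : ℕ):ℝ)/e₂ + 1/e₂ := by ring
    have h1e : 1/(e₂:ℝ) ≤ 1 := by
      rw [div_le_one he₂R]
      exact_mod_cast he₂
    linarith
  rw [hcard, hiteq]
  constructor
  · linarith
  · linarith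
end
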